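/- arXiv:1901.11048 — 9 statements merged into one kernel-verified Lean document; each statement's English description precedes it below -/
import Mathlib

section
/- Let p1, p2 ∈ K(x)(t), let ω ∈ K(x,c) with ω ∉ K(x), and let φ : K(x)(t) → K(x,c) be a ring homomorphism that fixes K(x) pointwise and satisfies φ(t) = ω. If σ(φ(p1)) = φ(p2), then deg_t p1 = deg_t p2, where for an element r of K(x)(t), written as a quotient of coprime polynomials in t over K(x), deg_t r denotes the maximum of the degrees in t of its numerator and denominator. -/
open Polynomial

/-- The degree of a rational function: the maximum of the degrees of its numerator
and denominator (in lowest terms). -/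
noncomputable def ratDeg {F : Type*} [Field F] (r : RatFunc F) : ℕ :=
  max r.num.natDegree r.denom.natDegree

open scoped nonZeroDivisors

namespace StmtAux
variable {F : Type*} [Field F]
/-- Extensionality for ring homs out of `RatFunc`. -/
theorem ratfunc_ringHom_ext {L : Type*} [Field L] {f g : RatFunc F →+* L}
    (hC : ∀ a : F, f (algebraMap F (RatFunc F) a) = g (algebraMap F (RatFunc F) a))
    (hX : f RatFunc.X = g RatFunc.X) : f = g := by
  have hpoly : f.comp (algebraMap F[X] (RatFunc F))
      = g.comp (algebraMap F[X] (RatFunc F)) := by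
    apply Polynomial.ringHom_ext
    · intro a
      simpa [RatFunc.algebraMap_C, ← RatFunc.algebraMap_eq_C] using hC a
    · simpa [RatFunc.algebraMap_X] using hX
  ext r
  have h1 : ∀ P : F[X], f (algebraMap F[X] (RatFunc F) P) = g (algebraMap F[X] (RatFunc F) P) :=
    fun P => congrArg (fun h : F[X] →+* L => h P) hpoly
  rw [← RatFunc.num_div_denom r, map_div₀, map_div₀, h1, h1]


theorem ratDeg_div (A B : F[X]) (hAB : IsCoprime A B) (hB : B ≠ 0) :
    ratDeg (algebraMap F[X] (RatFunc F) A / algebraMap F[X] (RatFunc F) B)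
      = max A.natDegree B.natDegree := by
  set x := algebraMap F[X] (RatFunc F) A / algebraMap F[X] (RatFunc F) B with hx
  have hBne : algebraMap F[X] (RatFunc F) B ≠ 0 := by
    simpa using hB
  have hden : algebraMap F[X] (RatFunc F) x.denom ≠ 0 := by
    simpa using x.denom_ne_zero
  have hcross : x.num * B = A * x.denom := by
    apply RatFunc.algebraMap_injective
    push_cast [map_mul]
    rw [← div_eq_div_iff hden hBne, RatFunc.num_div_denom]
  by_cases hA : A = 0
  · subst hA
    have hBu : IsUnit B := (isCoprime_zero_left.mp hAB)
    have hx0 : x = 0 := by simp [hx]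
    rw [hx0]
    simp [ratDeg, Polynomial.natDegree_eq_zero_of_isUnit hBu]
  · have hxne : x ≠ 0 := by
      simp only [hx, div_ne_zero_iff]
      constructor <;> simpa
    have hnum_ne : x.num ≠ 0 := RatFunc.num_ne_zero hxne
    have hnd : x.num ∣ A := by simpa [hx] using RatFunc.num_div_dvd A hB
    have hdd : x.denom ∣ B := by simpa [hx] using RatFunc.denom_div_dvd A B
    have hAn : A ∣ x.num := by
      apply hAB.dvd_of_dvd_mul_right
      exact ⟨x.denom, hcross⟩
    have hBd : B ∣ x.denom := by
      apply (hAB.symm).dvd_of_dvd_mul_right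
      exact ⟨x.num, by linear_combination -hcross⟩
    have e1 : x.num.natDegree = A.natDegree :=
      le_antisymm (Polynomial.natDegree_le_of_dvd hnd hA) (Polynomial.natDegree_le_of_dvd hAn hnum_ne)
    have e2 : x.denom.natDegree = B.natDegree :=
      le_antisymm (Polynomial.natDegree_le_of_dvd hdd hB) (Polynomial.natDegree_le_of_dvd hBd x.denom_ne_zero)
    simp [ratDeg, e1, e2]





/-- Homogenized substitution numerator: `v^n * A(u/v)` as a polynomial. -/
noncomputable def til (u v : F[X]) (n : ℕ) (A : F[X]) : F[X] :=
  ∑ i ∈ Finset.range (n+1), Polynomial.C (A.coeff i) * u^i * v^(n-i)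

theorem algebraMap_til {u v A : F[X]} {n : ℕ} (hA : A.natDegree < n + 1)
    {ω : RatFunc F} (hv : v ≠ 0) (hωeq : algebraMap F[X] (RatFunc F) u / algebraMap F[X] (RatFunc F) v = ω) :
    algebraMap F[X] (RatFunc F) (til u v n A)
      = (algebraMap F[X] (RatFunc F) v) ^ n * Polynomial.eval₂ (algebraMap F (RatFunc F)) ω A := by
  have hvne : algebraMap F[X] (RatFunc F) v ≠ 0 := by simpa using hv
  rw [Polynomial.eval₂_eq_sum_range' _ hA, til, map_sum, Finset.mul_sum]
  apply Finset.sum_congr rfl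
  intro i hi
  have hin : i ≤ n := Nat.lt_succ_iff.mp (Finset.mem_range.mp hi)
  rw [map_mul, map_mul, map_pow, map_pow]
  have hCa : algebraMap F[X] (RatFunc F) (Polynomial.C (A.coeff i)) = algebraMap F (RatFunc F) (A.coeff i) := by
    rw [RatFunc.algebraMap_C, RatFunc.algebraMap_eq_C]
  rw [hCa, ← hωeq, div_pow, ← pow_sub_mul_pow (algebraMap F[X] (RatFunc F) v) hin]
  field_simp

theorem natDegree_til_le (u v A : F[X]) (n : ℕ) :
    (til u v n A).natDegree ≤ n * max u.natDegree v.natDegree := by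
  apply Polynomial.natDegree_sum_le_of_forall_le
  intro i hi
  have hin : i ≤ n := Nat.lt_succ_iff.mp (Finset.mem_range.mp hi)
  calc (Polynomial.C (A.coeff i) * u^i * v^(n-i)).natDegree
      ≤ (Polynomial.C (A.coeff i) * u^i).natDegree + (v^(n-i)).natDegree := Polynomial.natDegree_mul_le
    _ ≤ ((Polynomial.C (A.coeff i)).natDegree + (u^i).natDegree) + (v^(n-i)).natDegree := by
        exact Nat.add_le_add_right Polynomial.natDegree_mul_le _
    _ ≤ i * u.natDegree + (n-i) * v.natDegree := by
        simp [Polynomial.natDegree_pow]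
    _ ≤ i * max u.natDegree v.natDegree + (n-i) * max u.natDegree v.natDegree := by
        gcongr <;> simp
    _ = (i + (n-i)) * max u.natDegree v.natDegree := by ring
    _ = n * max u.natDegree v.natDegree := by rw [Nat.add_sub_cancel' hin]
theorem coeff_til_high {u v : F[X]} (hlt : v.natDegree < u.natDegree) (n : ℕ) (A : F[X]) :
    (til u v n A).coeff (n * u.natDegree) = A.coeff n * u.leadingCoeff ^ n := by
  rw [til, Polynomial.finset_sum_coeff, Finset.sum_range_succ]
  have h0 : ∀ i ∈ Finset.range n,
      (Polynomial.C (A.coeff i) * u^i * v^(n-i)).coeff (n * u.natDegree) = 0 := by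
    intro i hi
    have hin : i < n := Finset.mem_range.mp hi
    apply Polynomial.coeff_eq_zero_of_natDegree_lt
    calc (Polynomial.C (A.coeff i) * u^i * v^(n-i)).natDegree
        ≤ ((Polynomial.C (A.coeff i)).natDegree + (u^i).natDegree) + (v^(n-i)).natDegree :=
          le_trans Polynomial.natDegree_mul_le (Nat.add_le_add_right Polynomial.natDegree_mul_le _)
      _ ≤ i * u.natDegree + (n-i) * v.natDegree := by simp [Polynomial.natDegree_pow]
      _ < i * u.natDegree + (n-i) * u.natDegree := by
          exact Nat.add_lt_add_left (Nat.mul_lt_mul_of_pos_left hlt (by omega)) _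
      _ = n * u.natDegree := by rw [← Nat.add_mul, Nat.add_sub_cancel' hin.le]
  rw [Finset.sum_eq_zero h0, zero_add, Nat.sub_self, pow_zero, mul_one,
    Polynomial.coeff_C_mul]
  congr 1
  rw [← Polynomial.natDegree_pow, Polynomial.coeff_natDegree, Polynomial.leadingCoeff_pow]

theorem coeff_til_low {u v : F[X]} (hlt : u.natDegree < v.natDegree) (n : ℕ) (A : F[X]) :
    (til u v n A).coeff (n * v.natDegree) = A.coeff 0 * v.leadingCoeff ^ n := by
  rw [til, Polynomial.finset_sum_coeff, Finset.sum_range_succ']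
  have h0 : ∀ i ∈ Finset.range n,
      (Polynomial.C (A.coeff (i+1)) * u^(i+1) * v^(n-(i+1))).coeff (n * v.natDegree) = 0 := by
    intro i hi
    have hin : i < n := Finset.mem_range.mp hi
    apply Polynomial.coeff_eq_zero_of_natDegree_lt
    calc (Polynomial.C (A.coeff (i+1)) * u^(i+1) * v^(n-(i+1))).natDegree
        ≤ ((Polynomial.C (A.coeff (i+1))).natDegree + (u^(i+1)).natDegree) + (v^(n-(i+1))).natDegree :=
          le_trans Polynomial.natDegree_mul_le (Nat.add_le_add_right Polynomial.natDegree_mul_le _)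
      _ ≤ (i+1) * u.natDegree + (n-(i+1)) * v.natDegree := by simp [Polynomial.natDegree_pow]
      _ < (i+1) * v.natDegree + (n-(i+1)) * v.natDegree := by
          exact Nat.add_lt_add_right (Nat.mul_lt_mul_of_pos_left hlt (by omega)) _
      _ = n * v.natDegree := by rw [← Nat.add_mul, Nat.add_sub_cancel' hin]
  rw [Finset.sum_eq_zero h0]
  simp only [pow_zero, mul_one, Nat.sub_zero, one_mul, zero_add, Polynomial.coeff_C_mul]
  congr 1
  rw [← Polynomial.natDegree_pow, Polynomial.coeff_natDegree, Polynomial.leadingCoeff_pow]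

theorem coeff_til_eq {u v : F[X]} (hd : u.natDegree = v.natDegree) (hu : u ≠ 0) (hv : v ≠ 0)
    (n : ℕ) (A : F[X]) :
    (til u v n A).coeff (n * v.natDegree)
      = ∑ i ∈ Finset.range (n+1), A.coeff i * u.leadingCoeff ^ i * v.leadingCoeff ^ (n-i) := by
  rw [til, Polynomial.finset_sum_coeff]
  apply Finset.sum_congr rfl
  intro i hi
  have hin : i ≤ n := Nat.lt_succ_iff.mp (Finset.mem_range.mp hi)
  by_cases ha : A.coeff i = 0
  · simp [ha]
  · have hterm : (Polynomial.C (A.coeff i) * u^i * v^(n-i)).natDegree = n * v.natDegree := by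
      rw [Polynomial.natDegree_mul (mul_ne_zero (by simpa using ha) (pow_ne_zero _ hu))
          (pow_ne_zero _ hv),
        Polynomial.natDegree_mul (by simpa using ha) (pow_ne_zero _ hu)]
      simp only [Polynomial.natDegree_C, Polynomial.natDegree_pow, zero_add, hd]
      rw [← Nat.add_mul, Nat.add_sub_cancel' hin]
    rw [← hterm, Polynomial.coeff_natDegree]
    rw [Polynomial.leadingCoeff_mul, Polynomial.leadingCoeff_mul, Polynomial.leadingCoeff_C,
      Polynomial.leadingCoeff_pow, Polynomial.leadingCoeff_pow]
theorem top_coeff_ne {A B : F[X]} (hB : B ≠ 0) :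
    A.coeff (max A.natDegree B.natDegree) ≠ 0 ∨ B.coeff (max A.natDegree B.natDegree) ≠ 0 := by
  by_cases hBn : B.natDegree = max A.natDegree B.natDegree
  · right
    rw [← hBn, Polynomial.coeff_natDegree]
    exact Polynomial.leadingCoeff_ne_zero.mpr hB
  · left
    have hA : A.natDegree = max A.natDegree B.natDegree := by omega
    have hAne : A ≠ 0 := by
      rintro rfl
      simp only [Polynomial.natDegree_zero] at hA hBn
      omega
    rw [← hA, Polynomial.coeff_natDegree]
    exact Polynomial.leadingCoeff_ne_zero.mpr hAne

theorem eval_top_ne {A B : F[X]} (hAB : IsCoprime A B) (r : F) :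
    A.eval r ≠ 0 ∨ B.eval r ≠ 0 := by
  by_contra h
  push_neg at h
  have := hAB.map (Polynomial.evalRingHom r)
  simp only [Polynomial.coe_evalRingHom, h.1, h.2] at this
  exact not_isUnit_zero (isCoprime_zero_left.mp this)

theorem max_natDegree_til {u v A B : F[X]} (hu : u ≠ 0) (hv : v ≠ 0) (hAB : IsCoprime A B)
    (hB : B ≠ 0) :
    max (til u v (max A.natDegree B.natDegree) A).natDegree
        (til u v (max A.natDegree B.natDegree) B).natDegree
      = (max A.natDegree B.natDegree) * max u.natDegree v.natDegree := by
  set n := max A.natDegree B.natDegree with hn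
  set D := max u.natDegree v.natDegree with hD
  apply le_antisymm
  · exact max_le (natDegree_til_le u v A n) (natDegree_til_le u v B n)
  · have key : (til u v n A).coeff (n * D) ≠ 0 ∨ (til u v n B).coeff (n * D) ≠ 0 := by
      rcases lt_trichotomy u.natDegree v.natDegree with hlt | heq | hgt
      · have hDv : D = v.natDegree := by omega
        rw [hDv, coeff_til_low hlt, coeff_til_low hlt]
        have hlv : v.leadingCoeff ^ n ≠ 0 :=
          pow_ne_zero _ (Polynomial.leadingCoeff_ne_zero.mpr hv)
        rcases eval_top_ne hAB 0 with h | h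
        · left; exact mul_ne_zero (by rwa [Polynomial.coeff_zero_eq_eval_zero]) hlv
        · right; exact mul_ne_zero (by rwa [Polynomial.coeff_zero_eq_eval_zero]) hlv
      · have hDv : D = v.natDegree := by omega
        rw [hDv, coeff_til_eq heq hu hv, coeff_til_eq heq hu hv]
        set r : F := u.leadingCoeff * v.leadingCoeff⁻¹ with hr
        have hlv : v.leadingCoeff ≠ 0 := Polynomial.leadingCoeff_ne_zero.mpr hv
        have hsum : ∀ P : F[X], P.natDegree ≤ n →
            (∑ i ∈ Finset.range (n+1), P.coeff i * u.leadingCoeff ^ i * v.leadingCoeff ^ (n-i))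
              = v.leadingCoeff ^ n * P.eval r := by
          intro P hP
          rw [Polynomial.eval_eq_sum_range' (Nat.lt_succ_of_le hP), Finset.mul_sum]
          apply Finset.sum_congr rfl
          intro i hi
          have hin : i ≤ n := Nat.lt_succ_iff.mp (Finset.mem_range.mp hi)
          have hpow : v.leadingCoeff ^ n = v.leadingCoeff ^ (n - i) * v.leadingCoeff ^ i :=
            (pow_sub_mul_pow _ hin).symm
          rw [hr, mul_pow, inv_pow, hpow]
          field_simp
        rw [hsum A (le_max_left _ _), hsum B (le_max_right _ _)]
        have hlvn : v.leadingCoeff ^ n ≠ 0 := pow_ne_zero _ hlv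
        rcases eval_top_ne hAB r with h | h
        · left; exact mul_ne_zero hlvn h
        · right; exact mul_ne_zero hlvn h
      · have hDu : D = u.natDegree := by omega
        rw [hDu, coeff_til_high hgt, coeff_til_high hgt]
        have hlu : u.leadingCoeff ^ n ≠ 0 :=
          pow_ne_zero _ (Polynomial.leadingCoeff_ne_zero.mpr hu)
        rcases top_coeff_ne (A := A) hB with h | h
        · left; exact mul_ne_zero h hlu
        · right; exact mul_ne_zero h hlu
    rcases key with h | h
    · exact le_trans (Polynomial.le_natDegree_of_ne_zero h) (le_max_left _ _)
    · exact le_trans (Polynomial.le_natDegree_of_ne_zero h) (le_max_right _ _)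



theorem til_bezout {u v A B α β : F[X]} (hv : v ≠ 0)
    (hbez : α * A + β * B = 1) {m n : ℕ} (hα : α.natDegree ≤ m) (hβ : β.natDegree ≤ m)
    (hA : A.natDegree ≤ n) (hB : B.natDegree ≤ n) :
    til u v m α * til u v n A + til u v m β * til u v n B = v ^ (m + n) := by
  apply RatFunc.algebraMap_injective
  set ω : RatFunc F := algebraMap F[X] (RatFunc F) u / algebraMap F[X] (RatFunc F) v with hω
  have h1 := algebraMap_til (Nat.lt_succ_of_le hα) hv hω.symm
  have h2 := algebraMap_til (Nat.lt_succ_of_le hA) hv hω.symm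
  have h3 := algebraMap_til (Nat.lt_succ_of_le hβ) hv hω.symm
  have h4 := algebraMap_til (Nat.lt_succ_of_le hB) hv hω.symm
  rw [map_add, map_mul, map_mul, h1, h2, h3, h4, map_pow]
  have hE : Polynomial.eval₂ (algebraMap F (RatFunc F)) ω α
        * Polynomial.eval₂ (algebraMap F (RatFunc F)) ω A
      + Polynomial.eval₂ (algebraMap F (RatFunc F)) ω β
        * Polynomial.eval₂ (algebraMap F (RatFunc F)) ω B = 1 := by
    rw [← Polynomial.eval₂_mul, ← Polynomial.eval₂_mul, ← Polynomial.eval₂_add, hbez,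
      Polynomial.eval₂_one]
  calc (algebraMap F[X] (RatFunc F) v) ^ m * Polynomial.eval₂ (algebraMap F (RatFunc F)) ω α
        * ((algebraMap F[X] (RatFunc F) v) ^ n * Polynomial.eval₂ (algebraMap F (RatFunc F)) ω A)
      + (algebraMap F[X] (RatFunc F) v) ^ m * Polynomial.eval₂ (algebraMap F (RatFunc F)) ω β
        * ((algebraMap F[X] (RatFunc F) v) ^ n * Polynomial.eval₂ (algebraMap F (RatFunc F)) ω B)
      = (algebraMap F[X] (RatFunc F) v) ^ (m + n)
        * (Polynomial.eval₂ (algebraMap F (RatFunc F)) ω α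
            * Polynomial.eval₂ (algebraMap F (RatFunc F)) ω A
          + Polynomial.eval₂ (algebraMap F (RatFunc F)) ω β
            * Polynomial.eval₂ (algebraMap F (RatFunc F)) ω B) := by rw [pow_add]; ring
    _ = (algebraMap F[X] (RatFunc F) v) ^ (m + n) := by rw [hE, mul_one]

theorem isCoprime_til {u v A B : F[X]} (huv : IsCoprime u v) (hv : v ≠ 0)
    (hAB : IsCoprime A B) (hB : B ≠ 0) :
    IsCoprime (til u v (max A.natDegree B.natDegree) A)
      (til u v (max A.natDegree B.natDegree) B) := by
  classical
  set n := max A.natDegree B.natDegree with hn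
  obtain ⟨α, β, hbez⟩ := hAB
  set m := max α.natDegree β.natDegree with hm
  have key := til_bezout (u := u) hv hbez (le_max_left α.natDegree β.natDegree)
    (le_max_right α.natDegree β.natDegree) (le_max_left A.natDegree B.natDegree)
    (le_max_right A.natDegree B.natDegree)
  by_contra hnc
  have hgne : EuclideanDomain.gcd (til u v n A) (til u v n B) ≠ 0 := by
    rw [Ne, EuclideanDomain.gcd_eq_zero_iff]
    rintro ⟨hA0, hB0⟩
    rw [hA0, hB0, mul_zero, mul_zero, add_zero] at key
    exact pow_ne_zero _ hv key.symm
  have hgnu : ¬ IsUnit (EuclideanDomain.gcd (til u v n A) (til u v n B)) := by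
    intro h
    exact hnc (EuclideanDomain.gcd_isUnit_iff.mp h)
  obtain ⟨q, hqirr, hqdvd⟩ := WfDvdMonoid.exists_irreducible_factor hgnu hgne
  have hqA : q ∣ til u v n A := hqdvd.trans (EuclideanDomain.gcd_dvd_left _ _)
  have hqB : q ∣ til u v n B := hqdvd.trans (EuclideanDomain.gcd_dvd_right _ _)
  have hqprime : Prime q := hqirr.prime
  have hqv : q ∣ v := by
    apply hqprime.dvd_of_dvd_pow (n := m + n)
    rw [← key]
    exact dvd_add (hqA.mul_left _) (hqB.mul_left _)
  have htop : ∀ P : F[X], q ∣ til u v n P → P.coeff n = 0 := by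
    intro P hqP
    have hsplit : til u v n P
        = (∑ i ∈ Finset.range n, Polynomial.C (P.coeff i) * u^i * v^(n-i))
          + Polynomial.C (P.coeff n) * u^n := by
      rw [til, Finset.sum_range_succ, Nat.sub_self, pow_zero, mul_one]
    have hqsum : q ∣ ∑ i ∈ Finset.range n, Polynomial.C (P.coeff i) * u^i * v^(n-i) := by
      apply Finset.dvd_sum
      intro i hi
      have : q ∣ v ^ (n - i) :=
        hqv.trans (dvd_pow_self v (by have := Finset.mem_range.mp hi; omega))
      exact this.mul_left _
    have hqtop : q ∣ Polynomial.C (P.coeff n) * u^n := by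
      have : q ∣ til u v n P - ∑ i ∈ Finset.range n, Polynomial.C (P.coeff i) * u^i * v^(n-i) :=
        dvd_sub hqP hqsum
      rwa [hsplit, add_sub_cancel_left] at this
    rcases hqprime.dvd_mul.mp hqtop with h | h
    · by_contra hPn
      exact hqirr.not_isUnit (isUnit_of_dvd_unit h (Polynomial.isUnit_C.mpr (Ne.isUnit hPn)))
    · have hqu : q ∣ u := hqprime.dvd_of_dvd_pow h
      exact absurd (huv.isUnit_of_dvd' hqu hqv) hqirr.not_isUnit
  rcases top_coeff_ne (A := A) hB with h | h
  · exact h (htop A hqA)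
  · exact h (htop B hqB)


theorem ratDeg_comp (ω : RatFunc F) (hω : ω ∉ Set.range (algebraMap F (RatFunc F)))
    (φ : RatFunc F →+* RatFunc F)
    (hfix : ∀ r : F, φ (algebraMap F (RatFunc F) r) = algebraMap F (RatFunc F) r)
    (hX : φ RatFunc.X = ω) (p : RatFunc F) :
    ratDeg (φ p) = ratDeg p * ratDeg ω := by
  have hωne : ω ≠ 0 := by
    rintro rfl
    exact hω ⟨0, map_zero _⟩
  have huv : IsCoprime ω.num ω.denom := RatFunc.isCoprime_num_denom ω
  have hv : ω.denom ≠ 0 := ω.denom_ne_zero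
  have hu : ω.num ≠ 0 := RatFunc.num_ne_zero hωne
  have hωeq : algebraMap F[X] (RatFunc F) ω.num / algebraMap F[X] (RatFunc F) ω.denom = ω :=
    RatFunc.num_div_denom ω
  have hφP : ∀ P : F[X], φ (algebraMap F[X] (RatFunc F) P)
      = Polynomial.eval₂ (algebraMap F (RatFunc F)) ω P := by
    have hcomp : φ.comp (algebraMap F[X] (RatFunc F))
        = Polynomial.eval₂RingHom (algebraMap F (RatFunc F)) ω := by
      apply Polynomial.ringHom_ext
      · intro a
        simp only [RingHom.comp_apply, Polynomial.coe_eval₂RingHom, Polynomial.eval₂_C]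
        rw [RatFunc.algebraMap_C, ← RatFunc.algebraMap_eq_C, hfix]
      · simp only [RingHom.comp_apply, Polynomial.coe_eval₂RingHom, Polynomial.eval₂_X,
          RatFunc.algebraMap_X, hX]
    intro P
    exact congrArg (fun h : F[X] →+* RatFunc F => h P) hcomp
  set n := max p.num.natDegree p.denom.natDegree with hn
  have h1 := algebraMap_til (u := ω.num) (A := p.num) (n := n)
    (Nat.lt_succ_of_le (le_max_left _ _)) hv hωeq
  have h2 := algebraMap_til (u := ω.num) (A := p.denom) (n := n)
    (Nat.lt_succ_of_le (le_max_right _ _)) hv hωeq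
  have hvn : (algebraMap F[X] (RatFunc F) ω.denom) ^ n ≠ 0 := by
    apply pow_ne_zero
    simpa using hv
  have hEd : Polynomial.eval₂ (algebraMap F (RatFunc F)) ω p.denom ≠ 0 := by
    rw [← hφP]
    intro h0
    have := φ.injective (h0.trans (map_zero φ).symm)
    exact p.denom_ne_zero (by simpa using this)
  have hφ_eq : φ p = algebraMap F[X] (RatFunc F) (til ω.num ω.denom n p.num)
      / algebraMap F[X] (RatFunc F) (til ω.num ω.denom n p.denom) := by
    conv_lhs => rw [← RatFunc.num_div_denom p]
    rw [map_div₀, hφP, hφP, h1, h2, mul_div_mul_left _ _ hvn]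
  have hcop : IsCoprime (til ω.num ω.denom n p.num) (til ω.num ω.denom n p.denom) :=
    isCoprime_til huv hv (RatFunc.isCoprime_num_denom p) p.denom_ne_zero
  have htilB : til ω.num ω.denom n p.denom ≠ 0 := by
    intro h0
    rw [h0, map_zero] at h2
    exact hEd (by
      rcases mul_eq_zero.mp h2.symm with h | h
      · exact absurd h hvn
      · exact h)
  rw [hφ_eq, ratDeg_div _ _ hcop htilB, max_natDegree_til hu hv
    (RatFunc.isCoprime_num_denom p) p.denom_ne_zero]
  rfl

theorem ratDeg_tau (τ : F →+* F) (σ' : RatFunc F →+* RatFunc F)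
    (h1 : ∀ r : F, σ' (algebraMap F (RatFunc F) r) = algebraMap F (RatFunc F) (τ r))
    (h2 : σ' RatFunc.X = RatFunc.X) (g : RatFunc F) : ratDeg (σ' g) = ratDeg g := by
  have hP : ∀ P : F[X], σ' (algebraMap F[X] (RatFunc F) P)
      = algebraMap F[X] (RatFunc F) (P.map τ) := by
    have hcomp : σ'.comp (algebraMap F[X] (RatFunc F))
        = (algebraMap F[X] (RatFunc F)).comp (Polynomial.mapRingHom τ) := by
      apply Polynomial.ringHom_ext
      · intro a
        simp only [RingHom.comp_apply, Polynomial.coe_mapRingHom, Polynomial.map_C]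
        rw [RatFunc.algebraMap_C, RatFunc.algebraMap_C, ← RatFunc.algebraMap_eq_C, h1,
          RatFunc.algebraMap_eq_C]
      · simp only [RingHom.comp_apply, Polynomial.coe_mapRingHom, Polynomial.map_X,
          RatFunc.algebraMap_X, h2]
    intro P
    exact congrArg (fun h : F[X] →+* RatFunc F => h P) hcomp
  have hcop : IsCoprime (g.num.map τ) (g.denom.map τ) := by
    have := (RatFunc.isCoprime_num_denom g).map (Polynomial.mapRingHom τ)
    simpa using this
  have hden : g.denom.map τ ≠ 0 := Polynomial.map_ne_zero g.denom_ne_zero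
  have hg_eq : σ' g = algebraMap F[X] (RatFunc F) (g.num.map τ)
      / algebraMap F[X] (RatFunc F) (g.denom.map τ) := by
    conv_lhs => rw [← RatFunc.num_div_denom g]
    rw [map_div₀, hP, hP]
  rw [hg_eq, ratDeg_div _ _ hcop hden, ratDeg, Polynomial.natDegree_map, Polynomial.natDegree_map]


end StmtAux

open StmtAux

/-- If `ω ∈ K(x,c) \ K(x)` and `φ : K(x)(t) → K(x,c)` is the substitution
`t ↦ ω` fixing `K(x)`, and `σ(φ(p1)) = φ(p2)` where `σ` is the shift `x ↦ x + 1`, then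
`deg_t p1 = deg_t p2`. -/
theorem stmt_2 (K : Type*) [Field K] [IsAlgClosed K] [CharZero K]
    (p1 p2 : RatFunc (RatFunc K))
    (ω : RatFunc (RatFunc K))
    (hω : ω ∉ Set.range (algebraMap (RatFunc K) (RatFunc (RatFunc K))))
    (φ : RatFunc (RatFunc K) →+* RatFunc (RatFunc K))
    (hφfix : ∀ r : RatFunc K, φ (algebraMap (RatFunc K) (RatFunc (RatFunc K)) r) =
        algebraMap (RatFunc K) (RatFunc (RatFunc K)) r)
    (hφt : φ RatFunc.X = ω)
    (σ : RatFunc (RatFunc K) →+* RatFunc (RatFunc K))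
    (hσK : ∀ a : K, σ (algebraMap (RatFunc K) (RatFunc (RatFunc K))
        (algebraMap K (RatFunc K) a)) =
        algebraMap (RatFunc K) (RatFunc (RatFunc K)) (algebraMap K (RatFunc K) a))
    (hσx : σ (algebraMap (RatFunc K) (RatFunc (RatFunc K)) RatFunc.X) =
        algebraMap (RatFunc K) (RatFunc (RatFunc K)) RatFunc.X + 1)
    (hσc : σ RatFunc.X = RatFunc.X)
    (hsol : σ (φ p1) = φ p2) :
    ratDeg p1 = ratDeg p2 := by
  classical
  -- the shift endomorphism of K(x)
  set g : K[X] →+* RatFunc K :=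
    (algebraMap K[X] (RatFunc K)).comp
      (Polynomial.eval₂RingHom Polynomial.C (Polynomial.X + Polynomial.C 1)) with hg_def
  have hg_apply : ∀ P : K[X], g P
      = algebraMap K[X] (RatFunc K) (P.comp (Polynomial.X + Polynomial.C 1)) := by
    intro P; rfl
  have hg : K[X]⁰ ≤ (RatFunc K)⁰.comap g := by
    intro P hP
    have hPne : P ≠ 0 := nonZeroDivisors.ne_zero hP
    have : g P ≠ 0 := by
      rw [hg_apply]
      simpa using (Polynomial.comp_X_add_C_ne_zero_iff (t := 1)).mpr hPne
    exact mem_nonZeroDivisors_of_ne_zero this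
  set sh : RatFunc K →+* RatFunc K := RatFunc.liftRingHom g hg with hsh_def
  have hsh_poly : ∀ P : K[X], sh (algebraMap K[X] (RatFunc K) P) = g P := by
    intro P
    rw [hsh_def, RatFunc.liftRingHom_apply]
    simp
  have hshC : ∀ a : K, sh (algebraMap K (RatFunc K) a) = algebraMap K (RatFunc K) a := by
    intro a
    rw [RatFunc.algebraMap_eq_C, ← RatFunc.algebraMap_C, hsh_poly, hg_apply]
    simp [RatFunc.algebraMap_C, RatFunc.algebraMap_eq_C]
  have hshX : sh RatFunc.X = RatFunc.X + 1 := by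
    rw [← RatFunc.algebraMap_X, hsh_poly, hg_apply]
    simp [map_add, RatFunc.algebraMap_X, RatFunc.algebraMap_C, ← RatFunc.algebraMap_eq_C]
  -- σ agrees with coefficientwise sh on the image of K(x)
  have hcomm : ∀ r : RatFunc K,
      σ (algebraMap (RatFunc K) (RatFunc (RatFunc K)) r)
        = algebraMap (RatFunc K) (RatFunc (RatFunc K)) (sh r) := by
    have hext : σ.comp (algebraMap (RatFunc K) (RatFunc (RatFunc K)))
        = (algebraMap (RatFunc K) (RatFunc (RatFunc K))).comp sh := by
      apply ratfunc_ringHom_ext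
      · intro a
        simp only [RingHom.comp_apply]
        rw [hσK, hshC]
      · simp only [RingHom.comp_apply]
        rw [hσx, hshX, map_add, map_one]
    intro r
    exact congrArg (fun h : RatFunc K →+* RatFunc (RatFunc K) => h r) hext
  have h1 : ratDeg (φ p1) = ratDeg p1 * ratDeg ω := ratDeg_comp ω hω φ hφfix hφt p1
  have h2 : ratDeg (φ p2) = ratDeg p2 * ratDeg ω := ratDeg_comp ω hω φ hφfix hφt p2
  have h3 : ratDeg (σ (φ p1)) = ratDeg (φ p1) := ratDeg_tau sh σ hcomm hσc (φ p1)
  have hmain : ratDeg p1 * ratDeg ω = ratDeg p2 * ratDeg ω := by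
    rw [← h1, ← h2, ← h3, hsol]
  have hωdeg : ratDeg ω ≠ 0 := by
    intro h0
    apply hω
    simp only [ratDeg, Nat.max_eq_zero_iff] at h0
    obtain ⟨hn0, hd0⟩ := h0
    have hden1 : ω.denom = 1 := (ω.monic_denom.natDegree_eq_zero).mp hd0
    have hnumC : ω.num = Polynomial.C (ω.num.coeff 0) := Polynomial.eq_C_of_natDegree_eq_zero hn0
    have hωC : ω = algebraMap (RatFunc K) (RatFunc (RatFunc K)) (ω.num.coeff 0) := by
      conv_lhs => rw [← RatFunc.num_div_denom ω, hden1, hnumC]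
      rw [map_one, div_one, RatFunc.algebraMap_C, RatFunc.algebraMap_eq_C]
    exact ⟨_, hωC.symm⟩
  exact Nat.eq_of_mul_eq_mul_right (Nat.pos_of_ne_zero hωdeg) hmain
end

section
/- Let K be an algebraically closed field, let R, S ∈ K[z,w] be homogeneous polynomials such that every common divisor of R and S in K[z,w] is a unit, and let A, B ∈ K[x] be coprime polynomials. Then the polynomials R(A(x), B(x)) and S(A(x), B(x)) are coprime in K[x]. -/
open Polynomial

namespace Stmt4Aux

variable {K : Type*} [Field K]

/-- Scaling a homogeneous polynomial's evaluation point multiplies the value by `u ^ n`. -/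
lemma eval₂_mul_smul {S : Type*} [CommRing S] (g : K →+* S)
    {φ : MvPolynomial (Fin 2) K} {n : ℕ} (hφ : φ.IsHomogeneous n)
    (u : S) (y : Fin 2 → S) :
    MvPolynomial.eval₂ g (fun i => u * y i) φ = u ^ n * MvPolynomial.eval₂ g y φ := by
  rw [MvPolynomial.eval₂_eq', MvPolynomial.eval₂_eq', Finset.mul_sum]
  apply Finset.sum_congr rfl
  intro d hd
  rw [MvPolynomial.mem_support_iff] at hd
  have hdn : ∑ i, d i = n := by
    have h := hφ hd
    simpa [Finsupp.weight_apply, Finsupp.sum_fintype] using h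
  have : (∏ i, (u * y i) ^ d i) = u ^ n * ∏ i, y i ^ d i := by
    simp_rw [mul_pow, Finset.prod_mul_distrib, Finset.prod_pow_eq_pow_sum, hdn]
  rw [this]; ring

lemma not_isUnit_linear (c : K) :
    ¬ IsUnit (MvPolynomial.X 0 - MvPolynomial.C c * MvPolynomial.X 1 :
      MvPolynomial (Fin 2) K) := by
  intro h
  have h0 : MvPolynomial.eval (![0, 0] : Fin 2 → K)
      (MvPolynomial.X 0 - MvPolynomial.C c * MvPolynomial.X 1) = 0 := by
    simp
  have := h.map (MvPolynomial.eval (![0, 0] : Fin 2 → K))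
  rw [h0] at this
  exact not_isUnit_zero this

/-- If a homogeneous polynomial vanishes at `(a, b)` with `b ≠ 0`, the linear form
`z - (a/b) w` divides it. -/
lemma linear_dvd {R : MvPolynomial (Fin 2) K} {m : ℕ}
    (hR : R.IsHomogeneous m) (a b : K) (hb : b ≠ 0)
    (h0 : MvPolynomial.eval ![a, b] R = 0) :
    (MvPolynomial.X 0 - MvPolynomial.C (a / b) * MvPolynomial.X 1 :
      MvPolynomial (Fin 2) K) ∣ R := by
  set c := a / b with hc
  set e := MvPolynomial.finSuccEquiv K 1 with he
  set r : MvPolynomial (Fin 1) K := MvPolynomial.C c * MvPolynomial.X 0 with hr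
  -- first: the "substitution" of z ↦ c·w kills R
  have hsub : MvPolynomial.aeval ![r, (MvPolynomial.X 0 : MvPolynomial (Fin 1) K)] R = 0 := by
    have h1 : (![r, (MvPolynomial.X 0 : MvPolynomial (Fin 1) K)]) =
        fun i => (MvPolynomial.X 0 : MvPolynomial (Fin 1) K) *
          (![(MvPolynomial.C c : MvPolynomial (Fin 1) K), 1] i) := by
      funext i; fin_cases i <;> simp [hr, mul_comm]
    have h2 : MvPolynomial.aeval
        (fun i => (MvPolynomial.C (![c, 1] i) : MvPolynomial (Fin 1) K)) R =
        MvPolynomial.C (MvPolynomial.eval ![c, 1] R) := by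
      have h3 := MvPolynomial.comp_aeval_apply
        (f := ![c, (1 : K)]) (Algebra.ofId K (MvPolynomial (Fin 1) K)) R
      have h4 : MvPolynomial.aeval ![c, (1 : K)] R = MvPolynomial.eval ![c, 1] R := rfl
      rw [h4] at h3
      have h5 : ∀ x : K, Algebra.ofId K (MvPolynomial (Fin 1) K) x = MvPolynomial.C x := by
        intro x; rfl
      simpa only [h5] using h3.symm
    have h6 : MvPolynomial.eval ![c, 1] R = 0 := by
      have h7 : (![c, (1 : K)]) = fun i => b⁻¹ * (![a, b] i) := by
        funext i; fin_cases i <;> simp [hc, div_eq_inv_mul]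
        exact (inv_mul_cancel₀ hb).symm
      have h8 : MvPolynomial.eval (fun i => b⁻¹ * (![a, b] i)) R
          = b⁻¹ ^ m * MvPolynomial.eval ![a, b] R := by
        exact eval₂_mul_smul (RingHom.id K) hR b⁻¹ ![a, b]
      rw [h7, h8, h0, mul_zero]
    have h9 : (fun i => (MvPolynomial.X 0 : MvPolynomial (Fin 1) K) *
          (![(MvPolynomial.C c : MvPolynomial (Fin 1) K), 1] i)) =
        (fun i => (MvPolynomial.X 0 : MvPolynomial (Fin 1) K) *
          ((fun j => (MvPolynomial.C (![c, 1] j) : MvPolynomial (Fin 1) K)) i)) := by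
      funext i; fin_cases i <;> simp
    rw [h1, h9]
    have h10 := eval₂_mul_smul (algebraMap K (MvPolynomial (Fin 1) K)) hR
      (MvPolynomial.X 0) (fun j => (MvPolynomial.C (![c, 1] j) : MvPolynomial (Fin 1) K))
    rw [MvPolynomial.aeval_def, h10, ← MvPolynomial.aeval_def, h2, h6]
    simp
  -- transfer through finSuccEquiv
  have hroot : Polynomial.eval r (e R) = 0 := by
    have hcomp : ((Polynomial.aeval r).restrictScalars K).comp e.toAlgHom =
        MvPolynomial.aeval ![r, (MvPolynomial.X 0 : MvPolynomial (Fin 1) K)] := by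
      apply MvPolynomial.algHom_ext
      intro i
      fin_cases i
      · simp [he, MvPolynomial.finSuccEquiv_X_zero, hr]
      · have : (MvPolynomial.X 1 : MvPolynomial (Fin 2) K) =
            MvPolynomial.X (Fin.succ 0) := rfl
        simp [he, this, MvPolynomial.finSuccEquiv_X_succ]
    have := congrArg (fun ψ => ψ R) hcomp
    simp only [AlgHom.coe_comp, Function.comp_apply, AlgHom.coe_restrictScalars',
      AlgEquiv.toAlgHom_eq_coe, AlgHom.coe_coe] at this
    rw [hsub] at this
    rw [← Polynomial.coe_aeval_eq_eval]
    simpa using this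
  have hdvd : (Polynomial.X - Polynomial.C r) ∣ e R :=
    Polynomial.dvd_iff_isRoot.2 hroot
  have hlin : e (MvPolynomial.X 0 - MvPolynomial.C c * MvPolynomial.X 1) =
      Polynomial.X - Polynomial.C r := by
    have h1 : (MvPolynomial.X 1 : MvPolynomial (Fin 2) K) =
        MvPolynomial.X (Fin.succ 0) := rfl
    rw [map_sub, map_mul, h1]
    rw [MvPolynomial.finSuccEquiv_X_zero, MvPolynomial.finSuccEquiv_X_succ]
    have h2 : e (MvPolynomial.C c) = Polynomial.C (MvPolynomial.C c) := by
      rw [he, MvPolynomial.finSuccEquiv_apply]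
      simp
    rw [h2, hr, map_mul]
  have := map_dvd e.symm hdvd
  rw [← hlin, AlgEquiv.symm_apply_apply, AlgEquiv.symm_apply_apply] at this
  exact this

end Stmt4Aux

/-- If `R, S ∈ K[z,w]` are homogeneous with only unit common divisors and
`A, B ∈ K[x]` are coprime, then `R(A,B)` and `S(A,B)` are coprime in `K[x]`. -/
theorem stmt_4 (K : Type*) [Field K] [IsAlgClosed K]
    (R S : MvPolynomial (Fin 2) K) (m n : ℕ)
    (hR : R.IsHomogeneous m) (hS : S.IsHomogeneous n)
    (hRS : ∀ d : MvPolynomial (Fin 2) K, d ∣ R → d ∣ S → IsUnit d)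
    (A B : K[X]) (hAB : IsCoprime A B) :
    IsCoprime (MvPolynomial.aeval ![A, B] R) (MvPolynomial.aeval ![A, B] S) := by
  classical
  by_contra hcon
  set f := MvPolynomial.aeval ![A, B] R with hf
  set g := MvPolynomial.aeval ![A, B] S with hg
  -- common root of f and g
  obtain ⟨c, hcf, hcg⟩ : ∃ c : K, f.eval c = 0 ∧ g.eval c = 0 := by
    have hgcd : ¬ IsUnit (EuclideanDomain.gcd f g) := fun h =>
      hcon (EuclideanDomain.gcd_isUnit_iff.1 h)
    by_cases h0 : EuclideanDomain.gcd f g = 0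
    · rw [EuclideanDomain.gcd_eq_zero_iff] at h0
      exact ⟨0, by rw [h0.1]; simp, by rw [h0.2]; simp⟩
    · have hdeg : (EuclideanDomain.gcd f g).degree ≠ 0 := by
        intro hd
        exact hgcd (Polynomial.isUnit_iff_degree_eq_zero.2 hd)
      obtain ⟨c, hc⟩ := IsAlgClosed.exists_root _ hdeg
      refine ⟨c, ?_, ?_⟩
      · exact Polynomial.eval_eq_zero_of_dvd_of_eval_eq_zero
          (EuclideanDomain.gcd_dvd_left f g) hc
      · exact Polynomial.eval_eq_zero_of_dvd_of_eval_eq_zero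
          (EuclideanDomain.gcd_dvd_right f g) hc
  set a := A.eval c with ha
  set b := B.eval c with hb
  -- (a, b) ≠ (0, 0)
  have hab : ¬ (a = 0 ∧ b = 0) := by
    rintro ⟨ha0, hb0⟩
    obtain ⟨u, v, huv⟩ := hAB
    have h := congrArg (Polynomial.eval c) huv
    rw [Polynomial.eval_add, Polynomial.eval_mul, Polynomial.eval_mul,
      Polynomial.eval_one, ← ha, ← hb, ha0, hb0] at h
    simp at h
  -- evaluation commutes
  have key : ∀ P : MvPolynomial (Fin 2) K,
      Polynomial.eval c (MvPolynomial.aeval ![A, B] P) =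
      MvPolynomial.eval ![a, b] P := by
    intro P
    have h1 := MvPolynomial.comp_aeval_apply
      (f := ![A, B]) (Polynomial.aeval c : K[X] →ₐ[K] K) P
    have h2 : (fun i => (Polynomial.aeval c : K[X] →ₐ[K] K) (![A, B] i)) =
        (![a, b] : Fin 2 → K) := by
      funext i; fin_cases i <;> simp [ha, hb, Polynomial.coe_aeval_eq_eval]
    rw [h2] at h1
    have h3 : (Polynomial.aeval c : K[X] →ₐ[K] K) (MvPolynomial.aeval ![A, B] P) =
        Polynomial.eval c (MvPolynomial.aeval ![A, B] P) := by
      rw [← Polynomial.coe_aeval_eq_eval]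
    have h4 : MvPolynomial.aeval ![a, b] P = MvPolynomial.eval ![a, b] P := by
      rw [MvPolynomial.aeval_def]; rfl
    rw [← h3, h1, h4]
  have hRa : MvPolynomial.eval ![a, b] R = 0 := by rw [← key R]; exact hcf
  have hSa : MvPolynomial.eval ![a, b] S = 0 := by rw [← key S]; exact hcg
  by_cases hb0 : b = 0
  · -- a ≠ 0; swap coordinates
    have ha0 : a ≠ 0 := fun h => hab ⟨h, hb0⟩
    set E := MvPolynomial.renameEquiv K (Equiv.swap (0 : Fin 2) 1) with hE
    have hswap : ∀ P : MvPolynomial (Fin 2) K,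
        MvPolynomial.eval ![b, a] (E P) = MvPolynomial.eval ![a, b] P := by
      intro P
      have hvec : ((![b, a] : Fin 2 → K) ∘ (Equiv.swap (0 : Fin 2) 1)) = ![a, b] := by
        funext i
        fin_cases i <;> simp [Equiv.swap_apply_left, Equiv.swap_apply_right]
      rw [hE]
      simp only [MvPolynomial.renameEquiv_apply]
      rw [MvPolynomial.eval_rename, hvec]
    have hER : (E R).IsHomogeneous m := hR.rename_isHomogeneous
    have hES : (E S).IsHomogeneous n := hS.rename_isHomogeneous
    have hdR := Stmt4Aux.linear_dvd hER b a ha0 (by rw [hswap R]; exact hRa)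
    have hdS := Stmt4Aux.linear_dvd hES b a ha0 (by rw [hswap S]; exact hSa)
    set ℓ := (MvPolynomial.X 0 - MvPolynomial.C (b / a) * MvPolynomial.X 1 :
      MvPolynomial (Fin 2) K) with hℓ
    have h1 : E.symm ℓ ∣ R := by
      have := map_dvd E.symm hdR
      rwa [AlgEquiv.symm_apply_apply] at this
    have h2 : E.symm ℓ ∣ S := by
      have := map_dvd E.symm hdS
      rwa [AlgEquiv.symm_apply_apply] at this
    have hu := hRS _ h1 h2
    have hu' : IsUnit ℓ := by
      have := hu.map E
      rwa [AlgEquiv.apply_symm_apply] at this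
    exact Stmt4Aux.not_isUnit_linear (b / a) hu'
  · have hdR := Stmt4Aux.linear_dvd hR a b hb0 hRa
    have hdS := Stmt4Aux.linear_dvd hS a b hb0 hSa
    exact Stmt4Aux.not_isUnit_linear (a / b) (hRS _ hdR hdS)
end

section
/- Let P1, Q1, P2, Q2 ∈ K[z] be nonzero polynomials with P1, Q1 coprime, P2, Q2 coprime, and max(deg P1, deg Q1) = max(deg P2, deg Q2) = n ≥ 1. Let P̃i, Q̃i ∈ K[z,w] be the degree-n homogenizations of Pi, Qi (i = 1, 2). Let A, B ∈ K[x] be coprime polynomials with B ≠ 0, and set A′(x) = A(x+1), B′(x) = B(x+1). Assume Q̃1(A′,B′) ≠ 0, Q̃2(A,B) ≠ 0, and P̃1(A′,B′)·Q̃2(A,B) = P̃2(A,B)·Q̃1(A′,B′) in K[x] (i.e., A/B is a rational solution of the separable difference equation P1(y(x+1))/Q1(y(x+1)) = P2(y(x))/Q2(y(x))). Then there exists a constant c ∈ K such that P̃1(A′,B′) = c·P̃2(A,B) and Q̃1(A′,B′) = c·Q̃2(A,B). -/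
open Polynomial

/-- The degree-`n` homogenization of a univariate polynomial `P` (of degree `≤ n`):
`P̃(z,w) = Σ_{k=0}^{n} (coeff of z^k in P) · z^k · w^(n-k)`, with `z = X 0`, `w = X 1`. -/
noncomputable def homog {K : Type*} [Field K] (n : ℕ) (P : K[X]) :
    MvPolynomial (Fin 2) K :=
  ∑ k ∈ Finset.range (n + 1),
    MvPolynomial.C (P.coeff k) * MvPolynomial.X 0 ^ k * MvPolynomial.X 1 ^ (n - k)

noncomputable def homP {K : Type*} [Field K] (n : ℕ) (A B P : K[X]) : K[X] :=
  ∑ k ∈ Finset.range (n + 1), C (P.coeff k) * A ^ k * B ^ (n - k)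

lemma aeval_homog {K : Type*} [Field K] (n : ℕ) (A B P : K[X]) :
    MvPolynomial.aeval ![A, B] (homog n P) = homP n A B P := by
  simp [homog, homP]

lemma homP_eq {K : Type*} [Field K] (n : ℕ) (A B P : K[X]) (hB : B ≠ 0)
    (hPn : P.natDegree ≤ n) :
    algebraMap K[X] (FractionRing K[X]) (homP n A B P) =
      algebraMap K[X] (FractionRing K[X]) B ^ n *
        Polynomial.eval₂ ((algebraMap K[X] (FractionRing K[X])).comp C)
          (algebraMap K[X] (FractionRing K[X]) A / algebraMap K[X] (FractionRing K[X]) B) P := by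
  set ι := algebraMap K[X] (FractionRing K[X]) with hι
  have hιB : ι B ≠ 0 := by
    exact (map_ne_zero_iff ι (IsFractionRing.injective _ _)).2 hB
  rw [Polynomial.eval₂_eq_sum_range' _ (Nat.lt_succ_of_le hPn)]
  rw [homP, map_sum, Finset.mul_sum]
  refine Finset.sum_congr rfl fun k hk => ?_
  have hk' : k ≤ n := Nat.lt_succ_iff.mp (Finset.mem_range.mp hk)
  have hBk : ι B ^ n = ι B ^ (n - k) * ι B ^ k := by
    rw [← pow_add, Nat.sub_add_cancel hk']
  rw [map_mul, map_mul, map_pow, map_pow, hBk, div_pow, RingHom.comp_apply]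
  have hne := pow_ne_zero k hιB
  field_simp

lemma homP_mul {K : Type*} [Field K] {m n : ℕ} (A B : K[X]) (hB : B ≠ 0)
    {P Q : K[X]} (hP : P.natDegree ≤ m) (hQ : Q.natDegree ≤ n) :
    homP (m + n) A B (P * Q) = homP m A B P * homP n A B Q := by
  apply IsFractionRing.injective K[X] (FractionRing K[X])
  rw [map_mul, homP_eq _ _ _ _ hB hP, homP_eq _ _ _ _ hB hQ,
    homP_eq _ _ _ _ hB (le_trans natDegree_mul_le (add_le_add hP hQ)),
    Polynomial.eval₂_mul, pow_add]
  ring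

lemma homP_add {K : Type*} [Field K] (n : ℕ) (A B P Q : K[X]) :
    homP n A B (P + Q) = homP n A B P + homP n A B Q := by
  simp [homP, coeff_add, C_add, add_mul, Finset.sum_add_distrib]

lemma homP_one {K : Type*} [Field K] (n : ℕ) (A B : K[X]) :
    homP n A B 1 = B ^ n := by
  rw [homP, Finset.sum_eq_single 0]
  · simp
  · intro k _ hk
    simp [coeff_one, hk]
  · simp

lemma homP_coprime_B {K : Type*} [Field K] (n : ℕ) (A B P : K[X])
    (hc : P.coeff n ≠ 0) (hAB : IsCoprime A B) :
    IsCoprime (homP n A B P) B := by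
  have hsplit : homP n A B P =
      C (P.coeff n) * A ^ n + B * ∑ k ∈ Finset.range n, C (P.coeff k) * A ^ k * B ^ (n - k - 1) := by
    rw [homP, Finset.sum_range_succ, Finset.mul_sum, add_comm, Nat.sub_self, pow_zero, mul_one]
    congr 1
    refine Finset.sum_congr rfl fun k hk => ?_
    have hk' : k < n := Finset.mem_range.mp hk
    have h2 : n - k = (n - k - 1) + 1 := by omega
    conv_lhs => rw [h2, pow_succ]
    ring
  rw [hsplit]
  refine IsCoprime.add_mul_left_left ?_ _
  exact (isCoprime_mul_unit_left_left (isUnit_C.2 (isUnit_iff_ne_zero.2 hc)) _ _).2 hAB.pow_left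

lemma homP_cop {K : Type*} [Field K] {n : ℕ} {P Q : K[X]} (hc : IsCoprime P Q)
    (hPn : P.coeff n ≠ 0) (hP : P.natDegree ≤ n) (hQ : Q.natDegree ≤ n)
    (A B : K[X]) (hAB : IsCoprime A B) (hB : B ≠ 0) :
    IsCoprime (homP n A B P) (homP n A B Q) := by
  obtain ⟨U, V, hUV⟩ := hc
  set m := max U.natDegree V.natDegree with hm
  have e1 : homP m A B U * homP n A B P + homP m A B V * homP n A B Q = B ^ (m + n) := by
    rw [← homP_mul A B hB (le_max_left _ _) hP, ← homP_mul A B hB (le_max_right _ _) hQ,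
      ← homP_add, hUV, homP_one]
  have cB : IsCoprime (homP n A B P) (B ^ (m + n)) :=
    (homP_coprime_B n A B P hPn hAB).pow_right
  obtain ⟨a, b, hab⟩ := cB
  exact ⟨a + b * homP m A B U, b * homP m A B V, by linear_combination hab + b * e1⟩

lemma isCoprime_comp' {K : Type*} [Field K] {A B : K[X]} (h : IsCoprime A B) (r : K[X]) :
    IsCoprime (A.comp r) (B.comp r) := by
  obtain ⟨U, V, h⟩ := h
  exact ⟨U.comp r, V.comp r, by rw [← mul_comp, ← mul_comp, ← add_comp, h, one_comp]⟩

lemma comp_X_add_one_ne_zero {K : Type*} [Field K] {B : K[X]} (hB : B ≠ 0) :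
    B.comp (X + 1) ≠ 0 := by
  intro h
  apply hB
  have h2 : (B.comp (X + 1)).comp (X - 1) = B := by
    rw [comp_assoc]
    simp [add_comp, sub_comp]
  rw [h, zero_comp] at h2
  exact h2.symm

/-- If `A/B` (with `A, B` coprime, `B ≠ 0`) is a rational solution of the
separable difference equation `P1(y(x+1))/Q1(y(x+1)) = P2(y(x))/Q2(y(x))`, then there is a
constant `c ∈ K` with `P̃1(A',B') = c·P̃2(A,B)` and `Q̃1(A',B') = c·Q̃2(A,B)`, where
`A'(x) = A(x+1)`, `B'(x) = B(x+1)` and `P̃i, Q̃i` are the degree-`n` homogenizations. -/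
theorem stmt_6 (K : Type*) [Field K] [IsAlgClosed K] [CharZero K]
    (P1 Q1 P2 Q2 : K[X]) (n : ℕ)
    (hP1 : P1 ≠ 0) (hQ1 : Q1 ≠ 0) (hP2 : P2 ≠ 0) (hQ2 : Q2 ≠ 0)
    (hc1 : IsCoprime P1 Q1) (hc2 : IsCoprime P2 Q2)
    (hd1 : max P1.natDegree Q1.natDegree = n) (hd2 : max P2.natDegree Q2.natDegree = n)
    (hn : 1 ≤ n)
    (A B : K[X]) (hAB : IsCoprime A B) (hB : B ≠ 0)
    (hQ1ne : MvPolynomial.aeval ![A.comp (X + 1), B.comp (X + 1)] (homog n Q1) ≠ 0)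
    (hQ2ne : MvPolynomial.aeval ![A, B] (homog n Q2) ≠ 0)
    (heq : MvPolynomial.aeval ![A.comp (X + 1), B.comp (X + 1)] (homog n P1) *
            MvPolynomial.aeval ![A, B] (homog n Q2) =
          MvPolynomial.aeval ![A, B] (homog n P2) *
            MvPolynomial.aeval ![A.comp (X + 1), B.comp (X + 1)] (homog n Q1)) :
    ∃ c : K,
      MvPolynomial.aeval ![A.comp (X + 1), B.comp (X + 1)] (homog n P1) =
        C c * MvPolynomial.aeval ![A, B] (homog n P2) ∧
      MvPolynomial.aeval ![A.comp (X + 1), B.comp (X + 1)] (homog n Q1) =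
        C c * MvPolynomial.aeval ![A, B] (homog n Q2) := by
  have hAB' : IsCoprime (A.comp (X + 1)) (B.comp (X + 1)) := isCoprime_comp' hAB _
  have hB' : B.comp (X + 1) ≠ 0 := comp_X_add_one_ne_zero hB
  rw [aeval_homog] at hQ1ne hQ2ne
  rw [aeval_homog, aeval_homog, aeval_homog, aeval_homog] at heq
  simp only [aeval_homog]
  set A' := A.comp (X + 1)
  set B' := B.comp (X + 1)
  set p1 := homP n A' B' P1 with hp1
  set q1 := homP n A' B' Q1 with hq1
  set p2 := homP n A B P2 with hp2
  set q2 := homP n A B Q2 with hq2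
  -- coprimality of the evaluated homogenizations
  have cop1 : IsCoprime p1 q1 := by
    have hPle : P1.natDegree ≤ n := hd1 ▸ le_max_left _ _
    have hQle : Q1.natDegree ≤ n := hd1 ▸ le_max_right _ _
    rcases max_cases P1.natDegree Q1.natDegree with ⟨h1, _⟩ | ⟨h1, _⟩ <;> rw [h1] at hd1
    · exact homP_cop hc1 (hd1 ▸ mt leadingCoeff_eq_zero.mp hP1) hPle hQle A' B' hAB' hB'
    · exact (homP_cop hc1.symm (hd1 ▸ mt leadingCoeff_eq_zero.mp hQ1) hQle hPle A' B' hAB' hB').symm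
  have cop2 : IsCoprime p2 q2 := by
    have hPle : P2.natDegree ≤ n := hd2 ▸ le_max_left _ _
    have hQle : Q2.natDegree ≤ n := hd2 ▸ le_max_right _ _
    rcases max_cases P2.natDegree Q2.natDegree with ⟨h1, _⟩ | ⟨h1, _⟩ <;> rw [h1] at hd2
    · exact homP_cop hc2 (hd2 ▸ mt leadingCoeff_eq_zero.mp hP2) hPle hQle A B hAB hB
    · exact (homP_cop hc2.symm (hd2 ▸ mt leadingCoeff_eq_zero.mp hQ2) hQle hPle A B hAB hB).symm
  -- q1 and q2 are associated
  have d1 : q1 ∣ q2 := by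
    have h : q1 ∣ p1 * q2 := ⟨p2, by rw [heq]; ring⟩
    exact cop1.symm.dvd_of_dvd_mul_left h
  have d2 : q2 ∣ q1 := by
    have h : q2 ∣ p2 * q1 := ⟨p1, by rw [← heq]; ring⟩
    exact cop2.symm.dvd_of_dvd_mul_left h
  obtain ⟨u, hu⟩ := associated_of_dvd_dvd d2 d1
  obtain ⟨c, hcu, hC⟩ := Polynomial.isUnit_iff.mp u.isUnit
  refine ⟨c, ?_, ?_⟩
  · have hz : (p1 - C c * p2) * q2 = 0 := by
      have : q1 = C c * q2 := by rw [← hu, hC]; ring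
      rw [sub_mul, heq, this]
      ring
    have := (mul_eq_zero.mp hz).resolve_right hQ2ne
    exact sub_eq_zero.mp this
  · rw [← hu, hC]; ring
end

section
/- Let P1, Q1, P2, Q2 ∈ K[z] be nonzero polynomials with P1, Q1 coprime, P2, Q2 coprime, and max(deg P1, deg Q1) = max(deg P2, deg Q2) = n ≥ 1, and let P̃i, Q̃i ∈ K[z,w] be the degree-n homogenizations of Pi, Qi (i = 1, 2). Let A, B ∈ K[x] be coprime polynomials with B ≠ 0, set A′(x) = A(x+1), B′(x) = B(x+1), and suppose c ∈ K satisfies P̃1(A′,B′) = c·P̃2(A,B) and Q̃1(A′,B′) = c·Q̃2(A,B) in K[x]. Then c belongs to the set of constant candidates 𝒞 associated to P1, Q1, P2, Q2. -/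
open Polynomial

/-- The set of constant candidates `𝒞` associated to `P1, Q1, P2, Q2 ∈ K[z]`. -/
noncomputable def constantCandidates {K : Type*} [Field K] (P1 Q1 P2 Q2 : K[X]) : Set K :=
  {c | ∃ α : K, P1.eval α = c * P2.eval α ∧ Q1.eval α = c * Q2.eval α} ∪
  (if P1.natDegree = P2.natDegree then {P1.leadingCoeff / P2.leadingCoeff, 0} else ∅) ∪
  (if Q1.natDegree = Q2.natDegree then {Q1.leadingCoeff / Q2.leadingCoeff, 0} else ∅) ∪
  (if P1.natTrailingDegree = P2.natTrailingDegree then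
    {P1.trailingCoeff / P2.trailingCoeff, 0} else ∅) ∪
  (if Q1.natTrailingDegree = Q2.natTrailingDegree then
    {Q1.trailingCoeff / Q2.trailingCoeff, 0} else ∅)

lemma key_coeff {K : Type*} [Field K] (n m : ℕ) (P A B : K[X])
    (hA : A.natDegree ≤ m) (hB : B.natDegree ≤ m) :
    (MvPolynomial.aeval ![A, B] (homog n P)).coeff (n * m) =
      ∑ k ∈ Finset.range (n + 1), P.coeff k * (A.coeff m) ^ k * (B.coeff m) ^ (n - k) := by
  rw [homog, map_sum, finset_sum_coeff]
  refine Finset.sum_congr rfl fun k hk => ?_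
  rw [Finset.mem_range, Nat.lt_succ_iff] at hk
  rw [map_mul, map_mul, map_pow, map_pow, MvPolynomial.aeval_C, MvPolynomial.aeval_X,
    MvPolynomial.aeval_X]
  simp only [Matrix.cons_val_zero, Matrix.cons_val_one, Matrix.head_cons]
  have hnm : n * m = k * m + (n - k) * m := by
    rw [← add_mul, Nat.add_sub_cancel' hk]
  rw [Polynomial.algebraMap_eq, mul_assoc, coeff_C_mul, hnm,
    coeff_mul_add_eq_of_natDegree_le (natDegree_pow_le.trans (Nat.mul_le_mul_left _ hA))
      (natDegree_pow_le.trans (Nat.mul_le_mul_left _ hB)),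
    coeff_pow_of_natDegree_le hA, coeff_pow_of_natDegree_le hB, mul_assoc]

lemma coeff_comp_X_add_one {K : Type*} [Field K] (A : K[X]) (m : ℕ) (hA : A.natDegree ≤ m) :
    (A.comp (X + 1)).coeff m = A.coeff m := by
  rcases eq_or_ne A 0 with rfl | h0
  · simp
  have h1 : (X + 1 : K[X]) = X + C 1 := by rw [C_1]
  have hd1 : (X + 1 : K[X]).natDegree = 1 := by rw [h1]; exact natDegree_X_add_C 1
  have hdeg : (A.comp (X + 1)).natDegree = A.natDegree := by
    rw [natDegree_comp, hd1, mul_one]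
  rcases hA.eq_or_lt with h | h
  · rw [← h]
    conv_lhs => rw [← hdeg]
    rw [coeff_natDegree, coeff_natDegree, leadingCoeff_comp (by rw [hd1]; exact one_ne_zero),
      h1, leadingCoeff_X_add_C, one_pow, mul_one]
  · rw [coeff_eq_zero_of_natDegree_lt (by rw [hdeg]; exact h),
      coeff_eq_zero_of_natDegree_lt h]

/-- The constant `c` relating the homogenized system along a rational
solution `A/B` necessarily belongs to the set of constant candidates. -/
theorem stmt_7 (K : Type*) [Field K] [IsAlgClosed K] [CharZero K]
    (P1 Q1 P2 Q2 : K[X]) (n : ℕ)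
    (hP1 : P1 ≠ 0) (hQ1 : Q1 ≠ 0) (hP2 : P2 ≠ 0) (hQ2 : Q2 ≠ 0)
    (hc1 : IsCoprime P1 Q1) (hc2 : IsCoprime P2 Q2)
    (hd1 : max P1.natDegree Q1.natDegree = n) (hd2 : max P2.natDegree Q2.natDegree = n)
    (hn : 1 ≤ n)
    (A B : K[X]) (hAB : IsCoprime A B) (hB : B ≠ 0)
    (c : K)
    (hP : MvPolynomial.aeval ![A.comp (X + 1), B.comp (X + 1)] (homog n P1) =
        C c * MvPolynomial.aeval ![A, B] (homog n P2))
    (hQ : MvPolynomial.aeval ![A.comp (X + 1), B.comp (X + 1)] (homog n Q1) =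
        C c * MvPolynomial.aeval ![A, B] (homog n Q2)) :
    c ∈ constantCandidates P1 Q1 P2 Q2 := by
  set m := max A.natDegree B.natDegree with hm
  have hAm : A.natDegree ≤ m := le_max_left _ _
  have hBm : B.natDegree ≤ m := le_max_right _ _
  set u := A.coeff m with hu
  set v := B.coeff m with hv
  have hd1' : (X + 1 : K[X]).natDegree = 1 := by
    rw [show (X + 1 : K[X]) = X + C 1 by rw [C_1]]; exact natDegree_X_add_C 1
  have hA'm : (A.comp (X + 1)).natDegree ≤ m := by
    rw [natDegree_comp, hd1', mul_one]; exact hAm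
  have hB'm : (B.comp (X + 1)).natDegree ≤ m := by
    rw [natDegree_comp, hd1', mul_one]; exact hBm
  -- natDegree bounds on P's, Q's
  have hP1n : P1.natDegree ≤ n := le_of_max_le_left hd1.le
  have hQ1n : Q1.natDegree ≤ n := le_of_max_le_right hd1.le
  have hP2n : P2.natDegree ≤ n := le_of_max_le_left hd2.le
  have hQ2n : Q2.natDegree ≤ n := le_of_max_le_right hd2.le
  -- extract coefficient n*m from the two identities
  have key : ∀ R S : K[X],
      MvPolynomial.aeval ![A.comp (X + 1), B.comp (X + 1)] (homog n R) =
        C c * MvPolynomial.aeval ![A, B] (homog n S) →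
      (∑ k ∈ Finset.range (n + 1), R.coeff k * u ^ k * v ^ (n - k)) =
        c * ∑ k ∈ Finset.range (n + 1), S.coeff k * u ^ k * v ^ (n - k) := by
    intro R S h
    have := congrArg (fun p => Polynomial.coeff p (n * m)) h
    simp only [coeff_C_mul] at this
    rw [key_coeff n m R _ _ hA'm hB'm, key_coeff n m S _ _ hAm hBm,
      coeff_comp_X_add_one A m hAm, coeff_comp_X_add_one B m hBm] at this
    exact this
  have hPc := key P1 P2 hP
  have hQc := key Q1 Q2 hQ
  by_cases hv0 : v = 0
  · -- degenerate case: only the k = n term survives; leading coefficient relation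
    have hBne : B.natDegree ≠ m := by
      intro h
      apply hB
      have := coeff_natDegree (p := B)
      rw [h, ← hv, hv0] at this
      exact leadingCoeff_eq_zero.mp this.symm
    have hBlt : B.natDegree < m := lt_of_le_of_ne hBm hBne
    have hmA : A.natDegree = m := by
      rcases max_cases A.natDegree B.natDegree with ⟨h1, _⟩ | ⟨h1, h2⟩
      · exact h1.symm
      · omega
    have hAne : A ≠ 0 := by
      intro h
      rw [h, natDegree_zero] at hmA
      omega
    have hu0 : u ≠ 0 := by
      rw [hu, ← hmA, coeff_natDegree]
      exact leadingCoeff_ne_zero.mpr hAne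
    have hsum : ∀ R : K[X],
        (∑ k ∈ Finset.range (n + 1), R.coeff k * u ^ k * v ^ (n - k)) = R.coeff n * u ^ n := by
      intro R
      rw [Finset.sum_eq_single n]
      · rw [hv0, Nat.sub_self, pow_zero, mul_one]
      · intro k hk hkn
        rw [Finset.mem_range, Nat.lt_succ_iff] at hk
        rw [hv0, zero_pow (Nat.sub_ne_zero_of_lt (lt_of_le_of_ne hk hkn)), mul_zero]
      · intro h
        exact absurd (Finset.self_mem_range_succ n) h
    rw [hsum, hsum] at hPc hQc
    have hun : u ^ n ≠ 0 := pow_ne_zero _ hu0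
    have hPc' : P1.coeff n = c * P2.coeff n := by
      rcases mul_eq_mul_right_iff.mp (by linear_combination hPc : P1.coeff n * u ^ n = c * P2.coeff n * u ^ n) with h | h
      · exact h
      · exact absurd h hun
    have hQc' : Q1.coeff n = c * Q2.coeff n := by
      rcases mul_eq_mul_right_iff.mp (by linear_combination hQc : Q1.coeff n * u ^ n = c * Q2.coeff n * u ^ n) with h | h
      · exact h
      · exact absurd h hun
    by_cases hp1 : P1.coeff n = 0
    · -- then deg Q1 = n, use Q leading coefficients
      have hP1lt : P1.natDegree ≠ n := by
        intro h
        apply hP1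
        rw [← h] at hp1
        exact leadingCoeff_eq_zero.mp hp1
      have hQ1eq : Q1.natDegree = n := by
        rcases max_cases P1.natDegree Q1.natDegree with ⟨h1, h2⟩ | ⟨h1, _⟩ <;> omega
      have hq1 : Q1.coeff n ≠ 0 := by
        rw [← hQ1eq, coeff_natDegree]
        exact leadingCoeff_ne_zero.mpr hQ1
      have hq2 : Q2.coeff n ≠ 0 := by
        intro h
        rw [h, mul_zero] at hQc'
        exact hq1 hQc'
      have hQ2eq : Q2.natDegree = n := le_antisymm hQ2n (le_natDegree_of_ne_zero hq2)
      have hceq : c = Q1.leadingCoeff / Q2.leadingCoeff := by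
        rw [leadingCoeff, leadingCoeff, hQ1eq, hQ2eq, hQc']
        field_simp
      left; left; right
      rw [if_pos (hQ1eq.trans hQ2eq.symm)]
      exact Or.inl hceq
    · -- deg P1 = n, use P leading coefficients
      have hP1eq : P1.natDegree = n := le_antisymm hP1n (le_natDegree_of_ne_zero hp1)
      have hp2 : P2.coeff n ≠ 0 := by
        intro h
        rw [h, mul_zero] at hPc'
        exact hp1 hPc'
      have hP2eq : P2.natDegree = n := le_antisymm hP2n (le_natDegree_of_ne_zero hp2)
      have hceq : c = P1.leadingCoeff / P2.leadingCoeff := by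
        rw [leadingCoeff, leadingCoeff, hP1eq, hP2eq, hPc']
        field_simp
      left; left; left; right
      rw [if_pos (hP1eq.trans hP2eq.symm)]
      exact Or.inl hceq
  · -- generic case: evaluation at α = u / v
    set α := u / v with hα
    have hsum : ∀ R : K[X], R.natDegree ≤ n →
        (∑ k ∈ Finset.range (n + 1), R.coeff k * u ^ k * v ^ (n - k)) = v ^ n * R.eval α := by
      intro R hR
      rw [eval_eq_sum_range' (Nat.lt_succ_of_le hR), Finset.mul_sum]
      refine Finset.sum_congr rfl fun k hk => ?_
      rw [Finset.mem_range, Nat.lt_succ_iff] at hk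
      rw [hα, div_pow]
      have : v ^ n = v ^ (n - k) * v ^ k := (pow_sub_mul_pow v hk).symm
      rw [this]
      field_simp
    rw [hsum P1 hP1n, hsum P2 hP2n] at hPc
    rw [hsum Q1 hQ1n, hsum Q2 hQ2n] at hQc
    have hvn : (v : K) ^ n ≠ 0 := pow_ne_zero _ hv0
    left; left; left; left
    refine ⟨α, ?_, ?_⟩
    · have : v ^ n * P1.eval α = v ^ n * (c * P2.eval α) := by linear_combination hPc
      exact mul_left_cancel₀ hvn this
    · have : v ^ n * Q1.eval α = v ^ n * (c * Q2.eval α) := by linear_combination hQc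
      exact mul_left_cancel₀ hvn this
end

section
/- Let P1, Q1, P2, Q2 ∈ K[z] be nonzero polynomials with P1, Q1 coprime and P2, Q2 coprime. If P1·Q2 ≠ P2·Q1 (i.e., P1/Q1 ≠ P2/Q2 as rational functions), then the set of constant candidates 𝒞 associated to P1, Q1, P2, Q2 is a finite subset of K. -/
open Polynomial

/-- If `P1/Q1 ≠ P2/Q2`, then the set of constant candidates is finite. -/
theorem stmt_9 (K : Type*) [Field K] [IsAlgClosed K] [CharZero K]
    (P1 Q1 P2 Q2 : K[X])
    (hP1 : P1 ≠ 0) (hQ1 : Q1 ≠ 0) (hP2 : P2 ≠ 0) (hQ2 : Q2 ≠ 0)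
    (hc1 : IsCoprime P1 Q1) (hc2 : IsCoprime P2 Q2)
    (hne : P1 * Q2 ≠ P2 * Q1) :
    (constantCandidates P1 Q1 P2 Q2).Finite := by
  have hR : P1 * Q2 - P2 * Q1 ≠ 0 := sub_ne_zero.mpr hne
  have hroots : {α : K | (P1 * Q2 - P2 * Q1).IsRoot α}.Finite :=
    Polynomial.finite_setOf_isRoot hR
  have h1 : {c : K | ∃ α : K, P1.eval α = c * P2.eval α ∧ Q1.eval α = c * Q2.eval α}.Finite := by
    apply Set.Finite.subset (hroots.image
      (fun α => open Classical in if P2.eval α = 0 then Q1.eval α / Q2.eval α else P1.eval α / P2.eval α))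
    rintro c ⟨α, h1, h2⟩
    refine ⟨α, ?_, ?_⟩
    · simp only [Set.mem_setOf_eq, IsRoot, eval_sub, eval_mul, h1, h2]
      ring
    · by_cases hp : P2.eval α = 0
      · have hq : Q2.eval α ≠ 0 := by
          intro hq
          obtain ⟨u, v, huv⟩ := hc2
          have := congrArg (Polynomial.eval α) huv
          simp [hp, hq] at this
        simp only [hp, if_pos]
        field_simp [h2]
        linear_combination h2
      · simp only [hp, if_neg, if_false]
        field_simp [h1]
        linear_combination h1
  unfold constantCandidates
  refine (((h1.union ?_).union ?_).union ?_).union ?_ <;>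
    split <;> simp
end

section
/- Let p, q ∈ K[z] be coprime polynomials with q ≠ 0 such that the rational function f = p/q is non-constant (there is no k ∈ K with p = k·q). Let s ∈ K(x) be a rational function with q(s) ≠ 0, and suppose p(τ(s))·q(s) = p(s)·q(τ(s)) in K(x) (i.e., f(s(x+1)) = f(s(x))). Then s is a constant, i.e., s lies in the image of K in K(x). -/
open Polynomial

/-- A polynomial invariant under the shift `X ↦ X + 1` over a char-zero field is constant. -/
lemma aux_shift_invariant_const {K : Type*} [Field K] [CharZero K] {r : K[X]}
    (h : r.comp (X + 1) = r) : r = C (r.eval 0) := by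
  have hev : ∀ n : ℕ, r.eval (n : K) = r.eval 0 := by
    intro n
    induction n with
    | zero => simp
    | succ n ih =>
      have h2 := congrArg (eval (n : K)) h
      rw [eval_comp] at h2
      simp only [eval_add, eval_one, eval_X] at h2
      push_cast
      rw [h2, ih]
  have hz : r - C (r.eval 0) = 0 := by
    apply eq_zero_of_infinite_isRoot
    apply Set.infinite_of_injective_forall_mem (f := fun n : ℕ => (n : K)) Nat.cast_injective
    intro n
    simp [IsRoot, hev n]
  linear_combination (norm := ring_nf) hz

/-- Every fixed point of the shift endomorphism `τ` of `K(x)` is a constant. -/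
lemma aux_fix_const {K : Type*} [Field K] [CharZero K] (τ : RatFunc K →+* RatFunc K)
    (hτK : ∀ a : K, τ (algebraMap K (RatFunc K) a) = algebraMap K (RatFunc K) a)
    (hτX : τ RatFunc.X = RatFunc.X + 1)
    (t : RatFunc K) (ht : τ t = t) :
    ∃ c : K, t = algebraMap K (RatFunc K) c := by
  let τ' : RatFunc K →ₐ[K] RatFunc K := { toRingHom := τ, commutes' := hτK }
  have key : ∀ r : K[X], τ (algebraMap K[X] (RatFunc K) r) =
      algebraMap K[X] (RatFunc K) (r.comp (X + 1)) := by
    have hcomp : ∀ r : K[X], aeval (X + 1 : K[X]) r = r.comp (X + 1) := by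
      intro r
      simp [aeval_def, comp, eval₂_def, algebraMap_eq]
    have : τ'.comp (IsScalarTower.toAlgHom K K[X] (RatFunc K)) =
        (IsScalarTower.toAlgHom K K[X] (RatFunc K)).comp (aeval (X + 1 : K[X])) := by
      apply algHom_ext
      simp only [AlgHom.comp_apply, IsScalarTower.toAlgHom_apply, aeval_X]
      show τ (algebraMap K[X] (RatFunc K) X) = _
      rw [RatFunc.algebraMap_X, hτX]
      simp [RatFunc.algebraMap_X]
    intro r
    have := congrArg (fun f => f r) this
    simp [hcomp r] at this
    exact this
  set n := t.num with hn
  set d := t.denom with hd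
  have hdne : d ≠ 0 := RatFunc.denom_ne_zero t
  have hdcne : d.comp (X + 1) ≠ 0 := by
    intro h
    rw [show (X + 1 : K[X]) = X + C 1 by simp, comp_X_add_C_eq_zero_iff] at h
    exact hdne h
  have hinj := RatFunc.algebraMap_injective K
  have hane : ∀ r : K[X], r ≠ 0 → algebraMap K[X] (RatFunc K) r ≠ 0 := by
    intro r hr h
    exact hr (hinj (by simpa using h))
  have hteq : algebraMap K[X] (RatFunc K) n / algebraMap K[X] (RatFunc K) d = t :=
    RatFunc.num_div_denom t
  have hτteq : algebraMap K[X] (RatFunc K) (n.comp (X + 1)) /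
      algebraMap K[X] (RatFunc K) (d.comp (X + 1)) = t := by
    rw [← key, ← key, ← map_div₀, hteq, ht]
  -- cross multiply
  have hcross : n.comp (X + 1) * d = n * d.comp (X + 1) := by
    apply hinj
    have := hτteq.trans hteq.symm
    rw [div_eq_div_iff (hane _ hdcne) (hane _ hdne), ← map_mul, ← map_mul] at this
    exact this
  have hdvd : d ∣ d.comp (X + 1) :=
    (RatFunc.isCoprime_num_denom t).symm.dvd_of_dvd_mul_left
      (hcross ▸ dvd_mul_left d (n.comp (X + 1)))
  -- d.comp (X+1) = d
  have hdeg : (d.comp (X + 1)).natDegree = d.natDegree := by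
    rw [natDegree_comp, show (X + 1 : K[X]) = X + C 1 by simp, natDegree_X_add_C, mul_one]
  have hdc : d.comp (X + 1) = d := by
    obtain ⟨u, hu⟩ := hdvd
    have hune : u ≠ 0 := by
      intro h; rw [h, mul_zero] at hu; exact hdcne hu
    have hudeg : u.natDegree = 0 := by
      have := hdeg
      rw [hu, natDegree_mul hdne hune] at this
      omega
    have hmon : (d.comp (X + 1)).Monic := by
      have := (RatFunc.monic_denom t).comp_X_add_C 1
      simpa using this
    have hulc : u.coeff 0 = 1 := by
      have h1 : (d.comp (X + 1)).leadingCoeff = 1 := hmon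
      rw [hu, leadingCoeff_mul, (RatFunc.monic_denom t).leadingCoeff, one_mul] at h1
      rw [leadingCoeff, hudeg] at h1
      exact h1
    have : u = 1 := by
      rw [eq_C_of_natDegree_eq_zero hudeg, hulc, map_one]
    rw [hu, this, mul_one]
  have hd1 : d = 1 := by
    have hdc2 := aux_shift_invariant_const hdc
    have : d.natDegree = 0 := by rw [hdc2]; exact natDegree_C _
    exact ((RatFunc.monic_denom t).natDegree_eq_zero).mp this
  have hnc : n.comp (X + 1) = n := by
    have : n.comp (X + 1) * d = n * d := by rw [hcross, hdc]
    exact mul_right_cancel₀ hdne this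
  have hnconst : n = C (n.eval 0) := aux_shift_invariant_const hnc
  refine ⟨n.eval 0, ?_⟩
  rw [← hteq, hd1, map_one, div_one]
  conv_lhs => rw [hnconst]
  rw [RatFunc.algebraMap_C, RatFunc.algebraMap_eq_C]

/-- If `f = p/q ∈ K(z)` is a non-constant rational function and
`s ∈ K(x)` satisfies `f(s(x+1)) = f(s(x))` (with `τ` the shift `x ↦ x+1`), then `s`
is a constant. -/
theorem stmt_10 (K : Type*) [Field K] [IsAlgClosed K] [CharZero K]
    (p q : K[X]) (hq : q ≠ 0) (hpq : IsCoprime p q)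
    (hnc : ¬ ∃ k : K, p = C k * q)
    (τ : RatFunc K →+* RatFunc K)
    (hτK : ∀ a : K, τ (algebraMap K (RatFunc K) a) = algebraMap K (RatFunc K) a)
    (hτX : τ RatFunc.X = RatFunc.X + 1)
    (s : RatFunc K) (hqs : Polynomial.aeval s q ≠ 0)
    (heq : Polynomial.aeval (τ s) p * Polynomial.aeval s q =
      Polynomial.aeval s p * Polynomial.aeval (τ s) q) :
    ∃ k : K, s = algebraMap K (RatFunc K) k := by
  let τ' : RatFunc K →ₐ[K] RatFunc K := { toRingHom := τ, commutes' := hτK }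
  have hτaeval : ∀ r : K[X], aeval (τ s) r = τ (aeval s r) := by
    intro r
    exact aeval_algHom_apply τ' s r
  set P := aeval s p with hP
  set Q := aeval s q with hQ
  have hτQ : τ Q ≠ 0 := fun h => hqs (τ.injective (h.trans (map_zero τ).symm))
  -- the value t = P/Q is fixed by τ
  have ht : τ (P / Q) = P / Q := by
    rw [map_div₀, div_eq_div_iff hτQ hqs]
    rw [← hτaeval, ← hτaeval]
    exact heq
  obtain ⟨c, hc⟩ := aux_fix_const τ hτK hτX (P / Q) ht
  have hPc : P = algebraMap K (RatFunc K) c * Q := by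
    rw [div_eq_iff hqs] at hc
    rw [hc, mul_comm]
  -- s is a root of the nonzero polynomial p - C c * q
  have hroot : aeval s (p - C c * q) = 0 := by
    rw [map_sub, map_mul, aeval_C, ← hP, ← hQ, hPc, sub_self]
  have hrne : p - C c * q ≠ 0 := fun h => hnc ⟨c, sub_eq_zero.mp h⟩
  set r := p - C c * q with hr
  have hsplit : Splits r := IsAlgClosed.splits r
  have hfact := hsplit.eq_prod_roots
  have h0 : aeval s r = algebraMap K (RatFunc K) r.leadingCoeff *
      (Multiset.map (fun a => s - algebraMap K (RatFunc K) a) r.roots).prod := by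
    conv_lhs => rw [hfact]
    rw [map_mul, aeval_C, map_multiset_prod, Multiset.map_map]
    congr 1
    apply congrArg Multiset.prod
    apply Multiset.map_congr rfl
    intro a _
    simp
  rw [hroot] at h0
  have hlcne : algebraMap K (RatFunc K) r.leadingCoeff ≠ 0 := by
    simp [leadingCoeff_ne_zero.mpr hrne]
  have hprod : (Multiset.map (fun a => s - algebraMap K (RatFunc K) a) r.roots).prod = 0 := by
    rcases mul_eq_zero.mp h0.symm with h | h
    · exact absurd h hlcne
    · exact h
  rw [Multiset.prod_eq_zero_iff] at hprod
  obtain ⟨a, _, ha⟩ := Multiset.mem_map.mp hprod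
  exact ⟨a, sub_eq_zero.mp ha⟩
end

section
/- Let P1, Q1, P2, Q2 ∈ K[z] be nonzero polynomials with P1, Q1 coprime and P2, Q2 coprime. Let L = K(w, z1) be the rational function field in two independent variables w and z1 over K. Then the polynomials P1(z1) − w·P2(Z) and Q1(z1) − w·Q2(Z), regarded as polynomials in the variable Z with coefficients in L, are coprime in L[Z]; equivalently, they have no common root in an algebraic closure of L. (This expresses that the resultant with respect to Z of these two polynomials is nonzero.) -/
open Polynomial

noncomputable section Stmt11Aux

variable (K : Type*) [Field K]

/-- The swap of the two variables of `K[X][X]`. -/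
def stmt11_swap : K[X][X] →+* K[X][X] :=
  eval₂RingHom (eval₂RingHom (C.comp C) X) (C X)

@[simp] lemma stmt11_swap_CC (a : K) : stmt11_swap K (C (C a)) = C (C a) := by
  simp [stmt11_swap]

@[simp] lemma stmt11_swap_CX : stmt11_swap K (C X) = X := by
  simp [stmt11_swap]

@[simp] lemma stmt11_swap_X : stmt11_swap K X = C X := by
  simp [stmt11_swap]

lemma stmt11_swap_swap (p : K[X][X]) : stmt11_swap K (stmt11_swap K p) = p := by
  have : (stmt11_swap K).comp (stmt11_swap K) = RingHom.id _ := by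
    apply Polynomial.ringHom_ext'
    · apply Polynomial.ringHom_ext' <;> ext <;> simp
    · simp
  exact DFunLike.congr_fun this p

lemma stmt11_swap_injective : Function.Injective (stmt11_swap K) :=
  Function.LeftInverse.injective (stmt11_swap_swap K)

/-- The underlying polynomial hom `K[X] →+* RatFunc (RatFunc K)`, sending `X` to the outer
variable `z1` and constants to constants. -/
def stmt11_phi0 : K[X] →+* RatFunc (RatFunc K) :=
  (algebraMap ((RatFunc K)[X]) (RatFunc (RatFunc K))).comp
    (mapRingHom (algebraMap K (RatFunc K)))

lemma stmt11_phi0_injective : Function.Injective (stmt11_phi0 K) :=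
  (RatFunc.algebraMap_injective _).comp
    (Polynomial.map_injective _ (algebraMap K (RatFunc K)).injective)

lemma stmt11_phi0_cond :
    (nonZeroDivisors K[X]) ≤ (nonZeroDivisors (RatFunc (RatFunc K))).comap (stmt11_phi0 K) := by
  intro p hp
  simp only [Submonoid.mem_comap]
  rw [mem_nonZeroDivisors_iff_ne_zero]
  intro h0
  have : p = 0 := stmt11_phi0_injective K (by simpa using h0)
  exact (nonZeroDivisors.ne_zero hp) this

/-- The embedding `K(z1) → K(w, z1)`: the map `RatFunc K →+* RatFunc (RatFunc K)` sending `X`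
to the outer variable `z1` and `K` to constants. -/
def stmt11_phi : RatFunc K →+* RatFunc (RatFunc K) :=
  RatFunc.liftRingHom (stmt11_phi0 K) (stmt11_phi0_cond K)

lemma stmt11_phi_algebraMap (p : K[X]) :
    stmt11_phi K (algebraMap K[X] (RatFunc K) p) = stmt11_phi0 K p := by
  have := RatFunc.liftRingHom_apply_div (stmt11_phi0 K) (stmt11_phi0_cond K) p 1
  simp only [map_one, div_one] at this
  exact this

lemma stmt11_J_eq :
    (eval₂RingHom (mapRingHom (algebraMap K (RatFunc K)))
      (Polynomial.C (RatFunc.X : RatFunc K)) : K[X][X] →+* (RatFunc K)[X]) =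
    (mapRingHom (algebraMap K[X] (RatFunc K))).comp (stmt11_swap K) := by
  apply Polynomial.ringHom_ext'
  · apply Polynomial.ringHom_ext'
    · ext a
      simp [stmt11_swap, ← RatFunc.algebraMap_C,
        IsScalarTower.algebraMap_apply K K[X] (RatFunc K)]
    · simp [stmt11_swap, RatFunc.algebraMap_X]
  · simp [stmt11_swap, RatFunc.algebraMap_X]

/-- Key transcendence lemma: `w` satisfies no nonzero polynomial over `K(z1)`. -/
lemma stmt11_key {S : (RatFunc K)[X]} (hS : S ≠ 0) :
    eval₂ (stmt11_phi K)
      (algebraMap (RatFunc K) (RatFunc (RatFunc K)) RatFunc.X) S ≠ 0 := by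
  set w : RatFunc (RatFunc K) := algebraMap (RatFunc K) (RatFunc (RatFunc K)) RatFunc.X with hw
  intro h0
  -- integer-normalize S to get a polynomial over K[X]
  set S₀ : K[X][X] := IsLocalization.integerNormalization (nonZeroDivisors K[X]) S with hS₀
  have hS₀0 : S₀ ≠ 0 := by
    obtain ⟨b, hb⟩ :=
      IsLocalization.integerNormalization_map_to_map (nonZeroDivisors K[X]) S
    intro h
    rw [← hS₀, h, Polynomial.map_zero] at hb
    have hbne : algebraMap K[X] (RatFunc K) (b : K[X]) ≠ 0 :=
      RatFunc.algebraMap_ne_zero (nonZeroDivisors.ne_zero b.2)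
    have hz : (algebraMap K[X] (RatFunc K) (b : K[X])) • S = 0 := by
      rw [IsScalarTower.algebraMap_smul]; exact hb.symm
    exact hS ((smul_eq_zero.mp hz).resolve_left hbne)
  have h1 : eval₂ ((stmt11_phi K).comp (algebraMap K[X] (RatFunc K))) w S₀ = 0 :=
    IsLocalization.integerNormalization_eval₂_eq_zero (nonZeroDivisors K[X]) (stmt11_phi K) S h0
  have hcomp : (stmt11_phi K).comp (algebraMap K[X] (RatFunc K)) = stmt11_phi0 K :=
    RingHom.ext fun p => stmt11_phi_algebraMap K p
  rw [hcomp] at h1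
  -- rewrite via the injective chain
  have hwι : w = algebraMap ((RatFunc K)[X]) (RatFunc (RatFunc K)) (Polynomial.C RatFunc.X) := by
    rw [RatFunc.algebraMap_C, ← RatFunc.algebraMap_eq_C]
  have h2 : algebraMap ((RatFunc K)[X]) (RatFunc (RatFunc K))
      (eval₂ (mapRingHom (algebraMap K (RatFunc K))) (Polynomial.C RatFunc.X) S₀) = 0 := by
    rw [Polynomial.hom_eval₂]
    rw [hwι] at h1
    exact h1
  have h3 : eval₂ (mapRingHom (algebraMap K (RatFunc K))) (Polynomial.C RatFunc.X) S₀ = 0 := by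
    have := RatFunc.algebraMap_injective (RatFunc K)
    exact this (by simpa using h2)
  have h4 : (mapRingHom (algebraMap K[X] (RatFunc K))) (stmt11_swap K S₀) = 0 := by
    have := DFunLike.congr_fun (stmt11_J_eq K) S₀
    simp only [coe_eval₂RingHom, RingHom.comp_apply] at this
    rw [← this]
    exact h3
  have h5 : stmt11_swap K S₀ = 0 :=
    Polynomial.map_injective _ (RatFunc.algebraMap_injective K) (by simpa using h4)
  exact hS₀0 (stmt11_swap_injective K (by simpa using h5))

lemma stmt11_iota_eval (q : (RatFunc K)[X]) :
    algebraMap ((RatFunc K)[X]) (RatFunc (RatFunc K)) q =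
      eval₂ (algebraMap (RatFunc K) (RatFunc (RatFunc K))) RatFunc.X q := by
  have h1 : (algebraMap ((RatFunc K)[X]) (RatFunc (RatFunc K))).comp Polynomial.C =
      algebraMap (RatFunc K) (RatFunc (RatFunc K)) :=
    RatFunc.algebraMap_comp_C.trans RatFunc.algebraMap_eq_C.symm
  conv_lhs => rw [← Polynomial.eval₂_C_X (p := q)]
  rw [Polynomial.hom_eval₂, h1, RatFunc.algebraMap_X]

lemma stmt11_rho_phi :
    (stmt11_phi K).comp (algebraMap K (RatFunc K)) =
      (algebraMap (RatFunc K) (RatFunc (RatFunc K))).comp (algebraMap K (RatFunc K)) := by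
  ext k
  simp only [RingHom.comp_apply]
  rw [IsScalarTower.algebraMap_apply K K[X] (RatFunc K), stmt11_phi_algebraMap]
  simp [stmt11_phi0, Polynomial.algebraMap_apply, RatFunc.algebraMap_C,
    RatFunc.algebraMap_eq_C]

lemma stmt11_eval_eq (P : K[X]) :
    eval₂ ((algebraMap (RatFunc K) (RatFunc (RatFunc K))).comp (algebraMap K (RatFunc K)))
        (RatFunc.X : RatFunc (RatFunc K)) P =
      stmt11_phi K (algebraMap K[X] (RatFunc K) P) := by
  rw [stmt11_phi_algebraMap]
  rw [show stmt11_phi0 K = (algebraMap ((RatFunc K)[X]) (RatFunc (RatFunc K))).comp (mapRingHom (algebraMap K (RatFunc K))) from rfl]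
  rw [RingHom.comp_apply, stmt11_iota_eval]
  simp [Polynomial.eval₂_map]

end Stmt11Aux

/-- For nonzero coprime pairs `(P1, Q1)` and `(P2, Q2)` in `K[z]`, the
polynomials `P1(z1) − w·P2(Z)` and `Q1(z1) − w·Q2(Z)` are coprime as polynomials in `Z`
over `L = K(w, z1)`. Here `L = RatFunc (RatFunc K)` with inner variable `w` and outer
variable `z1`. -/
theorem stmt_11 (K : Type*) [Field K] [IsAlgClosed K] [CharZero K]
    (P1 Q1 P2 Q2 : K[X])
    (hP1 : P1 ≠ 0) (hQ1 : Q1 ≠ 0) (hP2 : P2 ≠ 0) (hQ2 : Q2 ≠ 0)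
    (hc1 : IsCoprime P1 Q1) (hc2 : IsCoprime P2 Q2) :
    IsCoprime
      (C (Polynomial.eval₂
          ((algebraMap (RatFunc K) (RatFunc (RatFunc K))).comp (algebraMap K (RatFunc K)))
          (RatFunc.X : RatFunc (RatFunc K)) P1) -
        C (algebraMap (RatFunc K) (RatFunc (RatFunc K)) RatFunc.X) *
          P2.map ((algebraMap (RatFunc K) (RatFunc (RatFunc K))).comp
            (algebraMap K (RatFunc K))))
      (C (Polynomial.eval₂
          ((algebraMap (RatFunc K) (RatFunc (RatFunc K))).comp (algebraMap K (RatFunc K)))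
          (RatFunc.X : RatFunc (RatFunc K)) Q1) -
        C (algebraMap (RatFunc K) (RatFunc (RatFunc K)) RatFunc.X) *
          Q2.map ((algebraMap (RatFunc K) (RatFunc (RatFunc K))).comp
            (algebraMap K (RatFunc K)))) := by
  classical
  set ρ : K →+* RatFunc (RatFunc K) :=
    (algebraMap (RatFunc K) (RatFunc (RatFunc K))).comp (algebraMap K (RatFunc K)) with hρdef
  set w : RatFunc (RatFunc K) := algebraMap (RatFunc K) (RatFunc (RatFunc K)) RatFunc.X
    with hwdef
  set a : RatFunc (RatFunc K) := eval₂ ρ (RatFunc.X : RatFunc (RatFunc K)) P1 with hadef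
  set b : RatFunc (RatFunc K) := eval₂ ρ (RatFunc.X : RatFunc (RatFunc K)) Q1 with hbdef
  set pL : (RatFunc (RatFunc K))[X] := P2.map ρ with hpLdef
  set qL : (RatFunc (RatFunc K))[X] := Q2.map ρ with hqLdef
  set A : (RatFunc (RatFunc K))[X] := C a - C w * pL with hAdef
  set B : (RatFunc (RatFunc K))[X] := C b - C w * qL with hBdef
  obtain ⟨u, v, huv⟩ := hc2
  set uL : (RatFunc (RatFunc K))[X] := u.map ρ with huLdef
  set vL : (RatFunc (RatFunc K))[X] := v.map ρ with hvLdef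
  have hmapρ : ∀ P : K[X], P.map ρ = (P.map (algebraMap K (RatFunc K))).map (stmt11_phi K) := by
    intro P
    rw [Polynomial.map_map, stmt11_rho_phi]
  have ha : a = stmt11_phi K (algebraMap K[X] (RatFunc K) P1) := stmt11_eval_eq K P1
  have hb : b = stmt11_phi K (algebraMap K[X] (RatFunc K) Q1) := stmt11_eval_eq K Q1
  have hone : uL * pL + vL * qL = 1 := by
    have h := congrArg (Polynomial.map ρ) huv
    simpa [Polynomial.map_add, Polynomial.map_mul] using h
  have id1 : qL * A - pL * B = C a * qL - C b * pL := by
    rw [hAdef, hBdef]; ring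
  have id2 : uL * A + vL * B = C a * uL + C b * vL - C w := by
    have h : uL * A + vL * B = C a * uL + C b * vL - C w * (uL * pL + vL * qL) := by
      rw [hAdef, hBdef]; ring
    rw [h, hone, mul_one]
  have hano : a ≠ 0 := by
    rw [ha]
    exact fun h =>
      RatFunc.algebraMap_ne_zero hP1 ((stmt11_phi K).injective (h.trans (map_zero _).symm))
  have hc2' : IsCoprime P2 Q2 := ⟨u, v, huv⟩
  by_cases hcase : C a * qL - C b * pL = 0
  · -- degenerate case: P2, Q2 are constants, A is a unit constant
    have hpq : IsCoprime pL qL := by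
      have h := hc2'.map (mapRingHom ρ)
      simpa using h
    have hdvd : pL ∣ C a := by
      apply hpq.dvd_of_dvd_mul_right
      have : C a * qL = C b * pL := by rwa [sub_eq_zero] at hcase
      rw [this]
      exact dvd_mul_left pL (C b)
    have hu : IsUnit pL := isUnit_of_dvd_unit hdvd (Polynomial.isUnit_C.mpr hano.isUnit)
    obtain ⟨r, hr, hrp⟩ := Polynomial.isUnit_iff.mp hu
    have hk : r = ρ (P2.coeff 0) := by
      have h := congrArg (fun p => Polynomial.coeff p 0) hrp
      simpa [hpLdef, Polynomial.coeff_map] using h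
    have hk0 : P2.coeff 0 ≠ 0 := by
      intro h
      rw [h, map_zero] at hk
      exact hr.ne_zero hk
    have hAeq : A = C (a - w * r) := by
      rw [hAdef, ← hrp, map_sub, C_mul]
    have hne : a - w * r ≠ 0 := by
      rw [ha, hk]
      have hT : eval₂ (stmt11_phi K) w
          (Polynomial.C (algebraMap K[X] (RatFunc K) P1) -
            Polynomial.X * Polynomial.C (algebraMap K (RatFunc K) (P2.coeff 0))) =
          stmt11_phi K (algebraMap K[X] (RatFunc K) P1) - w * ρ (P2.coeff 0) := by
        have hcongr := DFunLike.congr_fun (stmt11_rho_phi K) (P2.coeff 0)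
        simp only [RingHom.comp_apply] at hcongr
        rw [Polynomial.eval₂_sub, Polynomial.eval₂_mul, Polynomial.eval₂_X, Polynomial.eval₂_C,
          Polynomial.eval₂_C, hcongr]
        rfl
      rw [← hT]
      apply stmt11_key
      intro h
      have h1 := congrArg (fun p => Polynomial.coeff p 1) h
      simp [Polynomial.coeff_X_mul, Polynomial.coeff_C] at h1
      exact hk0 h1
    have hAu : IsUnit A := by
      rw [hAeq]
      exact Polynomial.isUnit_C.mpr hne.isUnit
    obtain ⟨t, ht⟩ := isUnit_iff_exists_inv.mp hAu
    exact ⟨t, 0, by rw [zero_mul, add_zero, mul_comm]; exact ht⟩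
  · -- main case
    set cc : (RatFunc (RatFunc K))[X] := C a * qL - C b * pL with hccdef
    set G : (RatFunc (RatFunc K))[X] := C a * uL + C b * vL - C w with hGdef
    suffices hCG : IsCoprime cc G by
      obtain ⟨x, y, hxy⟩ := hCG
      exact ⟨x * qL + y * uL, y * vL - x * pL, by linear_combination x * id1 + y * id2 + hxy⟩
    by_contra hnc
    set d : (RatFunc (RatFunc K))[X] := EuclideanDomain.gcd cc G with hddef
    have hdu : ¬ IsUnit d := fun h => hnc (EuclideanDomain.gcd_isUnit_iff.mp h)
    have hd0 : d ≠ 0 := by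
      intro h
      exact hcase (zero_dvd_iff.mp (h ▸ EuclideanDomain.gcd_dvd_left cc G))
    have hdeg : d.degree ≠ 0 := fun h => hdu (Polynomial.isUnit_iff_degree_eq_zero.mpr h)
    set M := AlgebraicClosure (RatFunc (RatFunc K)) with hMdef
    set e : RatFunc (RatFunc K) →+* M := algebraMap (RatFunc (RatFunc K)) M with hedef
    have hdegM : (d.map e).degree ≠ 0 := by
      rwa [Polynomial.degree_map_eq_of_injective e.injective]
    obtain ⟨α, hα⟩ := IsAlgClosed.exists_root (d.map e) hdegM
    have hcα : (cc.map e).eval α = 0 :=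
      Polynomial.eval_eq_zero_of_dvd_of_eval_eq_zero
        (Polynomial.map_dvd e (EuclideanDomain.gcd_dvd_left cc G)) hα
    have hGα : (G.map e).eval α = 0 :=
      Polynomial.eval_eq_zero_of_dvd_of_eval_eq_zero
        (Polynomial.map_dvd e (EuclideanDomain.gcd_dvd_right cc G)) hα
    set κ : RatFunc K →+* M := e.comp (stmt11_phi K) with hκdef
    set F' : Subfield M := κ.fieldRange with hF'def
    set κ' : RatFunc K →+* F' := κ.rangeRestrictField with hκ'def
    have hκ'surj : Function.Surjective κ' := by
      rintro ⟨y, x, rfl⟩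
      exact ⟨x, rfl⟩
    have halg_eq : (algebraMap F' M).comp κ' = κ := rfl
    set c₁ : (RatFunc K)[X] :=
      Polynomial.C (algebraMap K[X] (RatFunc K) P1) * Q2.map (algebraMap K (RatFunc K)) -
        Polynomial.C (algebraMap K[X] (RatFunc K) Q1) * P2.map (algebraMap K (RatFunc K))
      with hc₁def
    have hcmap : cc = c₁.map (stmt11_phi K) := by
      rw [hccdef, hc₁def]
      rw [Polynomial.map_sub, Polynomial.map_mul, Polynomial.map_mul, Polynomial.map_C,
        Polynomial.map_C, ← ha, ← hb, ← hmapρ Q2, ← hmapρ P2]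
    have hc₁0 : c₁ ≠ 0 := fun h => hcase (by rw [hcmap, h, Polynomial.map_zero])
    have haux : ∀ T : (RatFunc K)[X], aeval α (T.map κ') = ((T.map (stmt11_phi K)).map e).eval α := by
      intro T
      rw [Polynomial.map_map, aeval_def, Polynomial.eval₂_map, halg_eq, Polynomial.eval_map]
    have hαalg : IsAlgebraic F' α := by
      refine ⟨c₁.map κ', ?_, ?_⟩
      · intro h
        exact hc₁0 (Polynomial.map_injective κ' κ'.injective (by simpa using h))
      · rw [haux, ← hcmap]
        exact hcα
    set H₁ : (RatFunc K)[X] :=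
      Polynomial.C (algebraMap K[X] (RatFunc K) P1) * u.map (algebraMap K (RatFunc K)) +
        Polynomial.C (algebraMap K[X] (RatFunc K) Q1) * v.map (algebraMap K (RatFunc K))
      with hH₁def
    have hGmap : G = H₁.map (stmt11_phi K) - C w := by
      rw [hGdef, hH₁def]
      rw [Polynomial.map_add, Polynomial.map_mul, Polynomial.map_mul, Polynomial.map_C,
        Polynomial.map_C, ← ha, ← hb, ← hmapρ u, ← hmapρ v]
    have hew : e w = aeval α (H₁.map κ') := by
      rw [haux]
      have h1 : (G.map e).eval α = ((H₁.map (stmt11_phi K)).map e).eval α - e w := by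
        rw [hGmap]
        simp [Polynomial.map_sub, Polynomial.eval_sub, Polynomial.eval_C]
      rw [h1] at hGα
      exact (sub_eq_zero.mp hGα).symm
    have hint : IsIntegral F' α := hαalg.isIntegral
    have hewInt : IsIntegral F' (e w) := by
      rw [hew]
      exact IsIntegral.of_mem_of_fg (Algebra.adjoin F' {α}) hint.fg_adjoin_singleton _
        (Polynomial.aeval_mem_adjoin_singleton _ _)
    obtain ⟨S, hS0, hSev⟩ := hewInt.isAlgebraic
    obtain ⟨S', hS'⟩ := Polynomial.map_surjective κ' hκ'surj S
    have hS'0 : S' ≠ 0 := by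
      intro h
      exact hS0 (by rw [← hS', h, Polynomial.map_zero])
    have hfinal : e (eval₂ (stmt11_phi K) w S') = 0 := by
      rw [Polynomial.hom_eval₂]
      have h2 : eval₂ κ (e w) S' = aeval (e w) S := by
        rw [← hS', aeval_def, Polynomial.eval₂_map, halg_eq]
      show eval₂ κ (e w) S' = 0
      rw [h2]
      exact hSev
    exact stmt11_key K (S := S') hS'0 (e.injective (by rw [map_zero]; exact hfinal))
end

section
/- Let F ∈ K[y,z,w] be a nonzero polynomial that is homogeneous of total degree D. Then the indicial polynomial 𝒫_F(t) ∈ K[t] of F is nonzero. -/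
open Polynomial

/-- `m(F) = min { i2 + 2·i3 : (i1,i2,i3) in the support of F }` (variables `y=0, z=1, w=2`). -/
noncomputable def mF {K : Type*} [Field K] (F : MvPolynomial (Fin 3) K) : ℕ :=
  sInf ((fun I : Fin 3 →₀ ℕ => I 1 + 2 * I 2) '' (F.support : Set (Fin 3 →₀ ℕ)))

/-- The indicial polynomial (at infinity) of `F ∈ K[y,z,w]`:
`𝒫_F(t) = Σ_{I ∈ M(F)} c_I · t^{i2} · (t(t−1))^{i3}` where `M(F)` is the set of
exponent vectors in the support of `F` minimizing `i2 + 2·i3`. -/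
noncomputable def indicialPoly {K : Type*} [Field K] (F : MvPolynomial (Fin 3) K) :
    K[X] :=
  ∑ I ∈ F.support.filter (fun I => I 1 + 2 * I 2 = mF F),
    C (MvPolynomial.coeff I F) * X ^ (I 1) * (X * (X - 1)) ^ (I 2)

/-- The indicial polynomial of a nonzero homogeneous polynomial
`F ∈ K[y,z,w]` of total degree `D` is nonzero. -/
theorem stmt_16 (K : Type*) [Field K] [IsAlgClosed K] [CharZero K]
    (F : MvPolynomial (Fin 3) K) (D : ℕ)
    (hF : F ≠ 0) (hhom : F.IsHomogeneous D) :
    indicialPoly F ≠ 0 := by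
  classical
  have hsupp : F.support.Nonempty := by
    rwa [Finset.nonempty_iff_ne_empty, Ne, MvPolynomial.support_eq_empty]
  have hdeg : ∀ I ∈ F.support, I 0 + I 1 + I 2 = D := by
    intro I hI
    have h := hhom (MvPolynomial.mem_support_iff.mp hI)
    rw [Finsupp.weight_apply, Finsupp.sum_fintype] at h
    · simpa [Fin.sum_univ_three, mul_comm] using h
    · simp
  set S := F.support.filter (fun I => I 1 + 2 * I 2 = mF F) with hS
  have hSne : S.Nonempty := by
    have hne : ((fun I : Fin 3 →₀ ℕ => I 1 + 2 * I 2) '' (F.support : Set (Fin 3 →₀ ℕ))).Nonempty := by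
      obtain ⟨I, hI⟩ := hsupp
      exact ⟨_, ⟨I, by simpa using hI, rfl⟩⟩
    obtain ⟨I, hI, hIm⟩ := Nat.sInf_mem hne
    exact ⟨I, Finset.mem_filter.mpr ⟨by simpa using hI, hIm⟩⟩
  obtain ⟨I0, hI0S, hmax⟩ := Finset.exists_max_image S (fun I => I 2) hSne
  obtain ⟨hI0supp, hI0m⟩ := Finset.mem_filter.mp hI0S
  set n0 := I0 1 + I0 2 with hn0
  have key : (indicialPoly F).coeff n0 = MvPolynomial.coeff I0 F * (-1 : K) ^ (I0 2) := by
    unfold indicialPoly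
    rw [← hS, Polynomial.finset_sum_coeff, Finset.sum_eq_single I0]
    · have h1 : (C (MvPolynomial.coeff I0 F) * X ^ (I0 1) * (X * (X - 1)) ^ (I0 2) : K[X])
          = C (MvPolynomial.coeff I0 F) * ((X - 1) ^ (I0 2) * X ^ n0) := by
        rw [hn0, mul_pow, pow_add]; ring
      rw [h1, Polynomial.coeff_C_mul, Polynomial.coeff_mul_X_pow']
      simp [Polynomial.coeff_zero_eq_eval_zero]
    · intro I hIS hne
      obtain ⟨hIsupp, hIm⟩ := Finset.mem_filter.mp hIS
      have h1 : (C (MvPolynomial.coeff I F) * X ^ (I 1) * (X * (X - 1)) ^ (I 2) : K[X])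
          = C (MvPolynomial.coeff I F) * ((X - 1) ^ (I 2) * X ^ (I 1 + I 2)) := by
        rw [mul_pow, pow_add]; ring
      have hlt : n0 < I 1 + I 2 := by
        have h2 : I 2 ≤ I0 2 := hmax I hIS
        rcases h2.lt_or_eq with h | h
        · omega
        · exfalso
          apply hne
          have e1 : I 1 = I0 1 := by omega
          have e0 : I 0 = I0 0 := by
            have := hdeg I hIsupp
            have := hdeg I0 hI0supp
            omega
          ext j
          fin_cases j <;> assumption
      rw [h1, Polynomial.coeff_C_mul, Polynomial.coeff_mul_X_pow']
      rw [if_neg (by omega)]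
      ring
    · intro h
      exact absurd hI0S h
  intro hzero
  have hc0 : MvPolynomial.coeff I0 F ≠ 0 := MvPolynomial.mem_support_iff.mp hI0supp
  rw [hzero, Polynomial.coeff_zero] at key
  rcases mul_eq_zero.mp key.symm with h | h
  · exact hc0 h
  · exact pow_ne_zero _ (neg_ne_zero.mpr one_ne_zero) h
end

section
/- Let K be a field of characteristic zero, let F ∈ K[y,z,w] be a nonzero polynomial that is homogeneous of total degree D, and let p ∈ K[x] be a nonzero polynomial of degree d satisfying F(p(x), Δp(x), Δ²p(x)) = 0 identically in K[x], where Δp(x) = p(x+1) − p(x) and Δ²p = Δ(Δp). Then 𝒫_F(d) = 0, i.e., the image of the natural number d in K is a root of the indicial polynomial 𝒫_F of F. -/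
open Polynomial

/-- The forward difference of a polynomial: `Δp(x) = p(x+1) − p(x)`. -/
noncomputable def polyShiftDiff {K : Type*} [Field K] (p : K[X]) : K[X] :=
  p.comp (X + 1) - p

section aux
variable {K : Type*} [Field K]

lemma psd_coeff_eq (p : K[X]) (e : ℕ) (hp : p.natDegree < e + 2) :
    (polyShiftDiff p).coeff e = (e + 1 : K) * p.coeff (e + 1) := by
  have hcomp : p.comp (X + 1) =
      ∑ k ∈ Finset.range (e + 2), C (p.coeff k) * (X + 1) ^ k := by
    rw [comp_eq_sum_left]
    exact Polynomial.sum_over_range' p (fun n => by simp) _ hp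
  have : (p.comp (X + 1)).coeff e
      = ∑ k ∈ Finset.range (e + 2), p.coeff k * (k.choose e : K) := by
    rw [hcomp, finset_sum_coeff]
    refine Finset.sum_congr rfl fun k _ => ?_
    rw [coeff_C_mul, coeff_X_add_one_pow]
  rw [polyShiftDiff, coeff_sub, this, Finset.sum_range_succ, Finset.sum_range_succ]
  rw [Finset.sum_eq_zero (fun k hk => by
    rw [Nat.choose_eq_zero_of_lt (Finset.mem_range.mp hk), Nat.cast_zero, mul_zero])]
  rw [Nat.choose_self, Nat.choose_succ_self_right]
  push_cast
  ring

lemma psd_degree_lt (p : K[X]) (hp : p.natDegree ≠ 0) :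
    (polyShiftDiff p).degree < p.degree := by
  have hp0 : p ≠ 0 := fun h => hp (by simp [h])
  have hc0 : p.comp (X + 1) ≠ 0 := by
    simpa [Polynomial.comp_eq_zero_iff] using hp0
  have hX1 : (X + 1 : K[X]).natDegree = 1 := by
    simpa using Polynomial.natDegree_X_add_C (1 : K)
  have hnd : (p.comp (X + 1)).natDegree = p.natDegree := by
    rw [natDegree_comp, hX1, mul_one]
  have hlc : (p.comp (X + 1)).leadingCoeff = p.leadingCoeff := by
    rw [Polynomial.leadingCoeff_comp (by rw [hX1]; exact one_ne_zero)]
    have : (X + 1 : K[X]).leadingCoeff = 1 := by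
      simpa using Polynomial.leadingCoeff_X_add_C (1 : K)
    rw [this, one_pow, mul_one]
  have hdeg : (p.comp (X + 1)).degree = p.degree := by
    rw [degree_eq_natDegree hc0, degree_eq_natDegree hp0, hnd]
  have := Polynomial.degree_sub_lt hdeg hc0 hlc
  rw [hdeg] at this
  exact this

lemma psd_zero (p : K[X]) (hp : p.natDegree = 0) : polyShiftDiff p = 0 := by
  obtain ⟨a, rfl⟩ := Polynomial.natDegree_eq_zero.mp hp
  simp [polyShiftDiff]

lemma psd_spec [CharZero K] (p : K[X]) (e : ℕ) (hp : p.natDegree = e + 1) :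
    (polyShiftDiff p).natDegree = e ∧ polyShiftDiff p ≠ 0 ∧
      (polyShiftDiff p).leadingCoeff = ((e + 1 : ℕ) : K) * p.leadingCoeff := by
  have hp0 : p ≠ 0 := fun h => by simp [h] at hp
  have hcoeff : (polyShiftDiff p).coeff e = (e + 1 : K) * p.leadingCoeff := by
    rw [psd_coeff_eq p e (by omega), Polynomial.leadingCoeff, hp]
  have hne : (polyShiftDiff p).coeff e ≠ 0 := by
    rw [hcoeff]
    refine mul_ne_zero ?_ (Polynomial.leadingCoeff_ne_zero.mpr hp0)
    have : ((e + 1 : ℕ) : K) ≠ 0 := Nat.cast_ne_zero.mpr (Nat.succ_ne_zero e)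
    push_cast at this; exact this
  have h1 : (polyShiftDiff p).degree < p.degree := psd_degree_lt p (by omega)
  have h2 : (polyShiftDiff p).natDegree ≤ e := by
    have : (polyShiftDiff p).degree ≤ (e : ℕ) := by
      rw [degree_eq_natDegree hp0, hp] at h1
      exact Order.le_of_lt_succ (by exact_mod_cast h1)
    exact Polynomial.natDegree_le_iff_degree_le.mpr this
  have h3 : e ≤ (polyShiftDiff p).natDegree := Polynomial.le_natDegree_of_ne_zero hne
  have hnd : (polyShiftDiff p).natDegree = e := le_antisymm h2 h3
  refine ⟨hnd, fun h => hne (by simp [h]), ?_⟩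
  rw [Polynomial.leadingCoeff, hnd, hcoeff]
  push_cast
  ring

lemma psd_lc (p : K[X]) [CharZero K] :
    (polyShiftDiff p).leadingCoeff = (p.natDegree : K) * p.leadingCoeff := by
  rcases Nat.eq_zero_or_eq_succ_pred p.natDegree with h | h
  · rw [psd_zero p h, h]; simp
  · obtain ⟨_, _, hlc⟩ := psd_spec p _ h
    rw [hlc]
    congr 1
    exact_mod_cast congrArg (fun n => ((n : ℕ) : K)) h.symm

end aux

/-- If the nonzero polynomial `p` of degree `d` satisfies
`F(p, Δp, Δ²p) = 0` for a nonzero homogeneous `F ∈ K[y,z,w]` of total degree `D`,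
then `d` is a root of the indicial polynomial of `F`. -/
theorem stmt_17 (K : Type*) [Field K] [CharZero K]
    (F : MvPolynomial (Fin 3) K) (D : ℕ)
    (hF : F ≠ 0) (hhom : F.IsHomogeneous D)
    (p : K[X]) (hp : p ≠ 0) (d : ℕ) (hd : p.natDegree = d)
    (hsol : MvPolynomial.aeval ![p, polyShiftDiff p, polyShiftDiff (polyShiftDiff p)] F = 0) :
    (indicialPoly F).eval (d : K) = 0 := by
  classical
  set a := p.leadingCoeff with ha_def
  have ha : a ≠ 0 := Polynomial.leadingCoeff_ne_zero.mpr hp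
  set q1 := polyShiftDiff p with hq1_def
  set q2 := polyShiftDiff q1 with hq2_def
  -- leading coefficients
  have hlc1 : q1.leadingCoeff = (d : K) * a := by
    rw [hq1_def, psd_lc, hd]
  have hlc2 : q2.leadingCoeff = (d : K) * ((d : K) - 1) * a := by
    rcases d with _ | _ | e
    · have h1 : q1 = 0 := by rw [hq1_def]; exact psd_zero p hd
      rw [hq2_def, h1]
      simp [polyShiftDiff]
    · have h1 : q1.natDegree = 0 := by
        rw [hq1_def]; exact (psd_spec p 0 hd).1
      have h2 : q2 = 0 := by rw [hq2_def]; exact psd_zero q1 h1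
      rw [h2]
      simp
    · obtain ⟨h1, _, hl1⟩ := psd_spec p (e + 1) hd
      obtain ⟨_, _, hl2⟩ := psd_spec q1 e h1
      rw [hq2_def, hl2, hlc1]
      push_cast
      ring
  -- homogeneity: degrees of support elements
  have hIsum : ∀ I ∈ F.support, I 0 + I 1 + I 2 = D := by
    intro I hI
    have h := hhom (MvPolynomial.mem_support_iff.mp hI)
    rw [show (Finsupp.weight 1 : (Fin 3 →₀ ℕ) →+ ℕ) = Finsupp.weight (fun _ => 1) from rfl,
      ← Finsupp.degree_eq_weight_one] at h
    rw [← h, Finsupp.degree_apply]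
    rw [Finset.sum_subset (Finset.subset_univ _) (fun x _ hx => Finsupp.notMem_support_iff.mp hx)]
    exact (Fin.sum_univ_three I).symm
  have hm_le : ∀ I ∈ F.support, mF F ≤ I 1 + 2 * I 2 := by
    intro I hI
    exact Nat.sInf_le ⟨I, by simpa using hI, rfl⟩
  -- evaluation of the indicial polynomial
  have heval : (indicialPoly F).eval (d : K)
      = ∑ I ∈ F.support.filter (fun I => I 1 + 2 * I 2 = mF F),
          MvPolynomial.coeff I F * (d : K) ^ (I 1) * ((d : K) * ((d : K) - 1)) ^ (I 2) := by
    rw [indicialPoly, eval_finset_sum]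
    refine Finset.sum_congr rfl fun I _ => ?_
    simp
  by_cases hcase : mF F ≤ D * d
  · -- main case
    set N := D * d - mF F with hN_def
    have key : ∀ I ∈ F.support,
        (p ^ (I 0) * q1 ^ (I 1) * q2 ^ (I 2)).coeff N
          = if I 1 + 2 * I 2 = mF F then
              a ^ D * (d : K) ^ (I 1) * ((d : K) * ((d : K) - 1)) ^ (I 2) else 0 := by
      intro I hI
      have hsum := hIsum I hI
      have hmle := hm_le I hI
      by_cases hq : p ^ (I 0) * q1 ^ (I 1) * q2 ^ (I 2) = 0
      · rw [hq, coeff_zero]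
        split_ifs with hMm
        · -- some factor is the zero polynomial; the corresponding cast factor vanishes
          rcases mul_eq_zero.mp hq with h | h
          · rcases mul_eq_zero.mp h with h' | h'
            · exact absurd h' (pow_ne_zero _ hp)
            · obtain ⟨hz, hne⟩ := pow_eq_zero_iff'.mp h'
              have : (d : K) * a = 0 := by rw [← hlc1, hz, leadingCoeff_zero]
              have hd0 : (d : K) = 0 := by
                rcases mul_eq_zero.mp this with h'' | h''
                · exact h''
                · exact absurd h'' ha
              rw [hd0, zero_pow hne]
              ring
          · obtain ⟨hz, hne⟩ := pow_eq_zero_iff'.mp h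
            have : (d : K) * ((d : K) - 1) * a = 0 := by
              rw [← hlc2, hz, leadingCoeff_zero]
            have hd0 : (d : K) * ((d : K) - 1) = 0 := by
              rcases mul_eq_zero.mp this with h'' | h''
              · exact h''
              · exact absurd h'' ha
            rw [hd0, zero_pow hne]
            ring
        · rfl
      · -- all factors nonzero
        have h12 : p ^ (I 0) * q1 ^ (I 1) ≠ 0 := fun h => hq (by rw [h, zero_mul])
        have h3 : q2 ^ (I 2) ≠ 0 := fun h => hq (by rw [h, mul_zero])
        have h1 : p ^ (I 0) ≠ 0 := fun h => h12 (by rw [h, zero_mul])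
        have h2 : q1 ^ (I 1) ≠ 0 := fun h => h12 (by rw [h, mul_zero])
        have hnd : (p ^ (I 0) * q1 ^ (I 1) * q2 ^ (I 2)).natDegree
            = I 0 * d + I 1 * q1.natDegree + I 2 * q2.natDegree := by
          rw [natDegree_mul h12 h3, natDegree_mul h1 h2, natDegree_pow, natDegree_pow,
            natDegree_pow, hd]
        have hD1 : I 1 = 0 ∨ q1.natDegree + 1 = d := by
          by_cases hI1 : I 1 = 0
          · exact Or.inl hI1
          · right
            have hq1ne : q1 ≠ 0 := fun h => h2 (by rw [h, zero_pow hI1])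
            have hdne : p.natDegree ≠ 0 := by
              intro h
              exact hq1ne (hq1_def ▸ psd_zero p h)
            obtain ⟨e, he⟩ : ∃ e, p.natDegree = e + 1 := ⟨p.natDegree - 1, by omega⟩
            have := (psd_spec p e he).1
            rw [hq1_def, this]
            omega
        have hD2 : I 2 = 0 ∨ q2.natDegree + 2 = d := by
          by_cases hI2 : I 2 = 0
          · exact Or.inl hI2
          · right
            have hq2ne : q2 ≠ 0 := fun h => h3 (by rw [h, zero_pow hI2])
            have hq1ne : q1 ≠ 0 := by
              intro h
              apply hq2ne
              rw [hq2_def, h]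
              exact psd_zero 0 (by simp)
            have hd1ne : q1.natDegree ≠ 0 := by
              intro h
              exact hq2ne (hq2_def ▸ psd_zero q1 h)
            obtain ⟨f, hf⟩ : ∃ f, q1.natDegree = f + 1 := ⟨q1.natDegree - 1, by omega⟩
            have h2nd := (psd_spec q1 f hf).1
            have hdne : p.natDegree ≠ 0 := by
              intro h
              exact hq1ne (hq1_def ▸ psd_zero p h)
            obtain ⟨e, he⟩ : ∃ e, p.natDegree = e + 1 := ⟨p.natDegree - 1, by omega⟩
            have h1nd := (psd_spec p e he).1
            rw [hq1_def] at hf h2nd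
            rw [hq2_def, hq1_def, h2nd]
            rw [h1nd] at hf
            omega
        have hkey : I 0 * d + I 1 * q1.natDegree + I 2 * q2.natDegree + (I 1 + 2 * I 2)
            = D * d := by
          rcases hD1 with hD1 | hD1 <;> rcases hD2 with hD2 | hD2
          · rw [hD1, hD2] at hsum ⊢
            have h0 : I 0 = D := by omega
            rw [h0]; ring
          · rw [hD1] at hsum ⊢
            rw [← hD2, ← hsum]; ring
          · rw [hD2] at hsum ⊢
            rw [← hD1, ← hsum]; ring
          · have hq12 : q1.natDegree = q2.natDegree + 1 := by omega
            rw [hq12, ← hD2, ← hsum]; ring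
        by_cases hMm : I 1 + 2 * I 2 = mF F
        · rw [if_pos hMm]
          have hNnd : N = (p ^ (I 0) * q1 ^ (I 1) * q2 ^ (I 2)).natDegree := by
            rw [hnd, hN_def]
            omega
          rw [hNnd, Polynomial.coeff_natDegree]
          rw [leadingCoeff_mul, leadingCoeff_mul, leadingCoeff_pow, leadingCoeff_pow,
            leadingCoeff_pow, hlc1, hlc2, ← ha_def]
          have : a ^ (I 0) * ((d : K) * a) ^ (I 1) * ((d : K) * ((d : K) - 1) * a) ^ (I 2)
              = a ^ (I 0 + I 1 + I 2) * (d : K) ^ (I 1) * ((d : K) * ((d : K) - 1)) ^ (I 2) := by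
            simp only [mul_pow, pow_add]
            ring
          rw [this, hsum]
        · rw [if_neg hMm]
          apply Polynomial.coeff_eq_zero_of_natDegree_lt
          rw [hnd]
          omega
    -- expand the solution equation and take the coefficient at N
    have hexp : MvPolynomial.aeval ![p, q1, q2] F
        = ∑ I ∈ F.support, C (MvPolynomial.coeff I F) *
            (p ^ (I 0) * q1 ^ (I 1) * q2 ^ (I 2)) := by
      rw [MvPolynomial.aeval_def, MvPolynomial.eval₂_eq']
      refine Finset.sum_congr rfl fun I _ => ?_
      rw [Fin.prod_univ_three]
      simp [Polynomial.algebraMap_eq, mul_assoc]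
    have hzero : (0 : K) = a ^ D * ((indicialPoly F).eval (d : K)) := by
      have h0 : ((0 : K[X])).coeff N = 0 := rfl
      calc (0 : K) = (MvPolynomial.aeval ![p, q1, q2] F).coeff N := by rw [hsol]; simp
        _ = ∑ I ∈ F.support, MvPolynomial.coeff I F *
              (p ^ (I 0) * q1 ^ (I 1) * q2 ^ (I 2)).coeff N := by
            rw [hexp, finset_sum_coeff]
            exact Finset.sum_congr rfl fun I _ => coeff_C_mul _
        _ = ∑ I ∈ F.support, (if I 1 + 2 * I 2 = mF F then
              MvPolynomial.coeff I F *
                (a ^ D * (d : K) ^ (I 1) * ((d : K) * ((d : K) - 1)) ^ (I 2)) else 0) := by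
            refine Finset.sum_congr rfl fun I hI => ?_
            rw [key I hI, mul_ite, mul_zero]
        _ = ∑ I ∈ F.support.filter (fun I => I 1 + 2 * I 2 = mF F),
              MvPolynomial.coeff I F *
                (a ^ D * (d : K) ^ (I 1) * ((d : K) * ((d : K) - 1)) ^ (I 2)) := by
            rw [Finset.sum_filter]
        _ = a ^ D * ((indicialPoly F).eval (d : K)) := by
            rw [heval, Finset.mul_sum]
            exact Finset.sum_congr rfl fun I _ => by ring
    have := hzero.symm
    rcases mul_eq_zero.mp this with h | h
    · exact absurd h (pow_ne_zero _ ha)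
    · exact h
  · -- degenerate case: mF F > D * d forces every term of the indicial polynomial to vanish at d
    rw [heval]
    refine Finset.sum_eq_zero fun I hI => ?_
    rw [Finset.mem_filter] at hI
    obtain ⟨hIs, hIm⟩ := hI
    have hsum := hIsum I hIs
    have hgt : D * d < I 1 + 2 * I 2 := by omega
    have hle2D : I 1 + 2 * I 2 ≤ 2 * D := by omega
    have hd1 : d ≤ 1 := by
      by_contra hh
      push_neg at hh
      have h2d : 2 * D ≤ D * d := by
        calc 2 * D = D * 2 := by ring
          _ ≤ D * d := Nat.mul_le_mul_left D hh
      omega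
    interval_cases d
    · rcases (by omega : I 1 ≠ 0 ∨ I 2 ≠ 0) with h | h
      · simp [zero_pow h]
      · simp [zero_pow h]
    · have h : I 2 ≠ 0 := by omega
      simp [sub_self, zero_pow h]
end
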